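/- arXiv:1908.05975 — 3 statements merged into one kernel-verified Lean document; each statement's English description precedes it below -/
import Mathlib

section
/- Let n ≥ 3, let ε_1,…,ε_n be the standard basis of ℝ^n, let Π⁺ = {ε_i − ε_j : 1 ≤ i < j ≤ n} ∪ {ε_i + ε_j : 1 ≤ i < j ≤ n} ∪ {ε_i : 1 ≤ i ≤ n} (the positive roots of B_n), and let S = Π⁺ ∖ {ε_i − ε_j : 1 ≤ i < j ≤ n−1}. Then there exists an order-two permutation σ of S such that for all γ, δ ∈ S: (a) if γ + δ ∈ Π⁺ then σ(γ) + σ(δ) ∉ Π⁺; and (b) if δ − γ ∈ S then σ(δ) − σ(γ) ∉ S. -/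
open scoped BigOperators

namespace ArrowBreakingPaper

variable {ι : Type*} {g : Type*} [LieRing g] [LieAlgebra ℝ g]

/-- `⁅e i, e j⁆` is a nonzero multiple of `e k` (the arrow `e i →^{e j} e k`). -/
def Arrow (e : ι → g) (i j k : ι) : Prop :=
  ∃ c : ℝ, c ≠ 0 ∧ ⁅e i, e j⁆ = c • e k

/-- A basis is *nice* if each bracket of two basis vectors is a multiple of a single basis
vector, and for all `i`, `k` there is at most one `j` such that the `e k`-coefficient of
`⁅e i, e j⁆` is nonzero. -/
def IsNiceBasis (e : Module.Basis ι ℝ g) : Prop :=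
  (∀ i j : ι, ∃ (k : ι) (c : ℝ), ⁅e i, e j⁆ = c • e k) ∧
  (∀ i k j j' : ι, e.repr ⁅e i, e j⁆ k ≠ 0 → e.repr ⁅e i, e j'⁆ k ≠ 0 → j = j')

/-- An *arrow-breaking involution* of the (nice) basis `e`. -/
def IsArrowBreaking (e : ι → g) (σ : Equiv.Perm ι) : Prop :=
  (∀ i, σ (σ i) = i) ∧
  (∀ i j k, Arrow e i j k → ∀ l, ¬ Arrow e l (σ j) (σ k)) ∧
  (∀ i j k, Arrow e i j k → ∀ m, ¬ Arrow e (σ i) (σ j) m)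

/-- A `σ`-diagonal metric: `⟨e i, e (σ j)⟩ = gᵢ δᵢⱼ` with all `gᵢ ≠ 0` and `g_{σ i} = gᵢ`. -/
def IsSigmaDiagonal [DecidableEq ι] (e : Module.Basis ι ℝ g) (σ : Equiv.Perm ι)
    (B : LinearMap.BilinForm ℝ g) : Prop :=
  ∃ gv : ι → ℝ, (∀ i, gv i ≠ 0) ∧ (∀ i, gv (σ i) = gv i) ∧
    ∀ i j, B (e i) (e (σ j)) = if i = j then gv i else 0

/-- Symmetry of a bilinear form. -/
def IsSymm (B : LinearMap.BilinForm ℝ g) : Prop := ∀ x y : g, B x y = B y x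

/-- Nondegeneracy of a bilinear form. -/
def Nondeg (B : LinearMap.BilinForm ℝ g) : Prop :=
  ∀ v : g, (∀ w : g, B v w = 0) → v = 0

/-- The Gram matrix of a bilinear form in a basis. -/
noncomputable def gram [Fintype ι] (e : Module.Basis ι ℝ g) (B : LinearMap.BilinForm ℝ g) :
    Matrix ι ι ℝ := Matrix.of fun i j => B (e i) (e j)

/-- The Ricci curvature `ric(v,w) = ½⟨dv♭, dw♭⟩ − ½⟨ad v, ad w⟩` written in the
coordinates of a basis `e`, where `dα(x,y) = −α(⁅x,y⁆)` and the scalar products on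
`Λ²g*` and `g*⊗g` are induced by the dual metric (inverse Gram matrix). -/
noncomputable def ricci [Fintype ι] [DecidableEq ι] (e : Module.Basis ι ℝ g)
    (B : LinearMap.BilinForm ℝ g) (v w : g) : ℝ :=
  (1/2) * ((1/2) * ∑ i, ∑ j, ∑ k, ∑ l,
      (gram e B)⁻¹ i k * (gram e B)⁻¹ j l * (-(B v ⁅e i, e j⁆)) * (-(B w ⁅e k, e l⁆)))
  - (1/2) * ∑ i, ∑ j, (gram e B)⁻¹ i j * B ⁅v, e i⁆ ⁅w, e j⁆

/-- Ricci-flatness of a metric on a Lie algebra. -/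
def IsRicciFlat (B : LinearMap.BilinForm ℝ g) : Prop :=
  ∀ (m : ℕ) (e : Module.Basis (Fin m) ℝ g) (v w : g), ricci e B v w = 0

/-- The Koszul formula characterizing the Levi-Civita connection. -/
def IsLeviCivita (B : LinearMap.BilinForm ℝ g) (nab : g → g → g) : Prop :=
  ∀ u v w : g, 2 * B (nab u v) w = B ⁅u, v⁆ w - B ⁅v, w⁆ u + B ⁅w, u⁆ v

/-- The curvature `R(u,v)w = ∇_{⁅u,v⁆} w − ∇_u ∇_v w + ∇_v ∇_u w`. -/
def curv (nab : g → g → g) (u v w : g) : g :=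
  nab ⁅u, v⁆ w - nab u (nab v w) + nab v (nab u w)

/-- Flatness of a metric on a Lie algebra. -/
def IsFlat (B : LinearMap.BilinForm ℝ g) : Prop :=
  ∃ nab : g → g → g, IsLeviCivita B nab ∧ ∀ u v w : g, curv nab u v w = 0


/-- The standard basis vectors `ε i` of `ℝ^∞`. -/
noncomputable def eps (i : ℕ) : ℕ → ℝ := fun j => if j = i then 1 else 0

/-- The positive roots of `B_n`: `ε_i ± ε_j` for `1 ≤ i < j ≤ n` and `ε_i` for `1 ≤ i ≤ n`. -/
def PiPlusB (n : ℕ) : Set (ℕ → ℝ) :=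
  {x | (∃ i j : ℕ, 1 ≤ i ∧ i < j ∧ j ≤ n ∧ (x = eps i - eps j ∨ x = eps i + eps j)) ∨
       (∃ i : ℕ, 1 ≤ i ∧ i ≤ n ∧ x = eps i)}

/-- `S = Π⁺ ∖ {ε_i − ε_j : 1 ≤ i < j ≤ n−1}`. -/
def SB (n : ℕ) : Set (ℕ → ℝ) :=
  PiPlusB n \ {x | ∃ i j : ℕ, 1 ≤ i ∧ i < j ∧ j ≤ n - 1 ∧ x = eps i - eps j}

namespace Braid

lemma eps_apply (i k : ℕ) : eps i k = if k = i then 1 else 0 := rfl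

lemma piplus_vals {n : ℕ} {x : ℕ → ℝ} (hx : x ∈ PiPlusB n) (k : ℕ) :
    x k = 0 ∨ x k = 1 ∨ x k = -1 := by
  rcases hx with ⟨i, j, hi, hij, hjn, (rfl|rfl)⟩ | ⟨i, hi, hin, rfl⟩
  · rcases eq_or_ne k i with rfl|h1 <;> rcases eq_or_ne k j with rfl|h2 <;>
      simp_all [eps_apply, Pi.sub_apply] <;> omega
  · rcases eq_or_ne k i with rfl|h1 <;> rcases eq_or_ne k j with rfl|h2 <;>
      simp_all [eps_apply, Pi.add_apply] <;> omega
  · rcases eq_or_ne k i with rfl|h1 <;> simp_all [eps_apply]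

lemma piplus_three {n : ℕ} {x : ℕ → ℝ} (hx : x ∈ PiPlusB n) {a b c : ℕ}
    (hab : a ≠ b) (hac : a ≠ c) (hbc : b ≠ c) (ha : x a ≠ 0) (hb : x b ≠ 0) :
    x c = 0 := by
  rcases hx with ⟨i, j, hi, hij, hjn, (rfl|rfl)⟩ | ⟨i, hi, hin, rfl⟩
  · have key : ∀ l, l ≠ i → l ≠ j → (eps i - eps j) l = 0 := by
      intro l h1 h2; simp [eps_apply, Pi.sub_apply, h1, h2]
    have ka : a = i ∨ a = j := by
      by_contra hc; push_neg at hc; exact ha (key a hc.1 hc.2)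
    have kb : b = i ∨ b = j := by
      by_contra hc; push_neg at hc; exact hb (key b hc.1 hc.2)
    have hc : c ≠ i ∧ c ≠ j := by omega
    exact key c hc.1 hc.2
  · have key : ∀ l, l ≠ i → l ≠ j → (eps i + eps j) l = 0 := by
      intro l h1 h2; simp [eps_apply, Pi.add_apply, h1, h2]
    have ka : a = i ∨ a = j := by
      by_contra hc; push_neg at hc; exact ha (key a hc.1 hc.2)
    have kb : b = i ∨ b = j := by
      by_contra hc; push_neg at hc; exact hb (key b hc.1 hc.2)
    have hc : c ≠ i ∧ c ≠ j := by omega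
    exact key c hc.1 hc.2
  · have key : ∀ l, l ≠ i → eps i l = 0 := by
      intro l h1; simp [eps_apply, h1]
    have ka : a = i := by by_contra hc; exact ha (key a hc)
    have kb : b = i := by by_contra hc; exact hb (key b hc)
    omega

lemma piplus_one {n : ℕ} {x : ℕ → ℝ} (hx : x ∈ PiPlusB n) : ∃ k, x k = 1 := by
  rcases hx with ⟨i, j, hi, hij, hjn, (rfl|rfl)⟩ | ⟨i, hi, hin, rfl⟩
  · exact ⟨i, by simp [eps_apply, Pi.sub_apply, hij.ne]⟩
  · exact ⟨i, by simp [eps_apply, Pi.add_apply, hij.ne]⟩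
  · exact ⟨i, by simp [eps_apply]⟩

lemma sb_neg {n : ℕ} {x : ℕ → ℝ} (hx : x ∈ SB n) {k : ℕ} (hk : x k = -1) : k = n := by
  obtain ⟨hp, hr⟩ := hx
  rcases hp with ⟨i, j, hi, hij, hjn, (rfl|rfl)⟩ | ⟨i, hi, hin, rfl⟩
  · have hkj : k = j := by
      rcases eq_or_ne k i with rfl|h1 <;> rcases eq_or_ne k j with rfl|h2 <;>
        simp_all [eps_apply, Pi.sub_apply] <;> norm_num at hk
    subst hkj
    by_contra hne
    exact hr ⟨i, k, hi, hij, by omega, rfl⟩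
  · rcases eq_or_ne k i with rfl|h1 <;> rcases eq_or_ne k j with rfl|h2 <;>
      simp_all [eps_apply, Pi.add_apply] <;> norm_num at hk
  · rcases eq_or_ne k i with rfl|h1 <;> simp_all [eps_apply] <;> norm_num at hk

lemma notin_two {n : ℕ} {x : ℕ → ℝ} {k : ℕ} (hk : x k = 2) : x ∉ PiPlusB n := by
  intro hx; rcases piplus_vals hx k with h|h|h <;> rw [hk] at h <;> norm_num at h

lemma notin_negtwo {n : ℕ} {x : ℕ → ℝ} {k : ℕ} (hk : x k = -2) : x ∉ PiPlusB n := by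
  intro hx; rcases piplus_vals hx k with h|h|h <;> rw [hk] at h <;> norm_num at h

lemma notin_three {n : ℕ} {x : ℕ → ℝ} {a b c : ℕ} (hab : a ≠ b) (hac : a ≠ c)
    (hbc : b ≠ c) (ha : x a ≠ 0) (hb : x b ≠ 0) (hc : x c ≠ 0) : x ∉ PiPlusB n := by
  intro hx; exact hc (piplus_three hx hab hac hbc ha hb)

lemma notin_sb_neg {n : ℕ} {x : ℕ → ℝ} {k : ℕ} (hk : x k = -1) (hkn : k ≠ n) :
    x ∉ SB n := fun hx => hkn (sb_neg hx hk)

lemma notin_sb_nonpos {n : ℕ} {x : ℕ → ℝ} (h : ∀ k, x k ≠ 1) : x ∉ SB n := by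
  intro hx; obtain ⟨k, hk⟩ := piplus_one hx.1; exact h k hk

lemma notin_sb_two {n : ℕ} {x : ℕ → ℝ} {k : ℕ} (hk : x k = 2) : x ∉ SB n :=
  fun hx => notin_two hk hx.1

lemma notin_sb_negtwo {n : ℕ} {x : ℕ → ℝ} {k : ℕ} (hk : x k = -2) : x ∉ SB n :=
  fun hx => notin_negtwo hk hx.1

lemma notin_sb_three {n : ℕ} {x : ℕ → ℝ} {a b c : ℕ} (hab : a ≠ b) (hac : a ≠ c)
    (hbc : b ≠ c) (ha : x a ≠ 0) (hb : x b ≠ 0) (hc : x c ≠ 0) : x ∉ SB n :=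
  fun hx => notin_three hab hac hbc ha hb hc hx.1

-- membership lemmas
lemma mem_pair {n i j : ℕ} (h1 : 1 ≤ i) (h2 : i < j) (h3 : j ≤ n) :
    eps i + eps j ∈ SB n := by
  refine ⟨Or.inl ⟨i, j, h1, h2, h3, Or.inr rfl⟩, ?_⟩
  rintro ⟨a, b, ha, hab, hbn, heq⟩
  have hba : b ≠ a := by omega
  have h := congrFun heq b
  simp only [eps_apply, Pi.add_apply, Pi.sub_apply, if_neg hba, if_pos rfl] at h
  split_ifs at h <;> norm_num at h

lemma mem_single {n i : ℕ} (h1 : 1 ≤ i) (h2 : i ≤ n) : eps i ∈ SB n := by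
  refine ⟨Or.inr ⟨i, h1, h2, rfl⟩, ?_⟩
  rintro ⟨a, b, ha, hab, hbn, heq⟩
  have hba : b ≠ a := by omega
  have h := congrFun heq b
  simp only [eps_apply, Pi.sub_apply, if_neg hba, if_pos rfl] at h
  split_ifs at h <;> norm_num at h

lemma mem_A {n i : ℕ} (h1 : 1 ≤ i) (h2 : i < n) : eps i - eps n ∈ SB n := by
  refine ⟨Or.inl ⟨i, n, h1, h2, le_refl n, Or.inl rfl⟩, ?_⟩
  rintro ⟨a, b, ha, hab, hbn, heq⟩
  have h := congrFun heq n
  have e1 : n ≠ i := by omega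
  have e2 : n ≠ a := by omega
  have e3 : n ≠ b := by omega
  simp [eps_apply, Pi.sub_apply, e1, e2, e3] at h

-- injectivity lemmas
lemma eps_inj {i j : ℕ} (h : eps i = eps j) : i = j := by
  have := congrFun h i
  by_contra hc
  simp [eps_apply, hc] at this

lemma pair_eq_pair {i j k l : ℕ} (hij : i < j) (hkl : k < l)
    (h : eps i + eps j = eps k + eps l) : i = k ∧ j = l := by
  have hik : i = k := by
    by_contra hik
    rcases eq_or_ne i l with rfl|hil
    · have h2 := congrFun h j
      have hjk : j ≠ k := by omega
      have hji : j ≠ i := by omega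
      simp [eps_apply, Pi.add_apply, hjk, hji] at h2
    · have h1 := congrFun h i
      have hij' : i ≠ j := hij.ne
      simp [eps_apply, Pi.add_apply, hij', hik, hil] at h1
  subst hik
  exact ⟨rfl, eps_inj (add_left_cancel h)⟩

lemma pair_ne_single {i j k : ℕ} (hij : i < j) : eps i + eps j ≠ eps k := by
  intro h
  have h1 := congrFun h i
  have h2 := congrFun h j
  have hik : i = k := by
    by_contra e; simp [eps_apply, Pi.add_apply, hij.ne, e] at h1
  have hjk : j = k := by
    by_contra e
    have hji : j ≠ i := by omega
    simp [eps_apply, Pi.add_apply, e, hji] at h2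
  omega

lemma pair_ne_A {i j k n : ℕ} (hij : i < j) (hjn : j ≤ n) (hkn : k < n) :
    eps i + eps j ≠ eps k - eps n := by
  intro h
  have h1 := congrFun h n
  have hni : n ≠ i := by omega
  have hnk : n ≠ k := by omega
  simp only [eps_apply, Pi.add_apply, Pi.sub_apply, if_neg hni, if_neg hnk,
    if_pos rfl] at h1
  split_ifs at h1 <;> norm_num at h1

lemma single_ne_A {i k n : ℕ} (hkn : k < n) : eps i ≠ eps k - eps n := by
  intro h
  have h1 := congrFun h n
  have hnk : n ≠ k := by omega
  simp only [eps_apply, Pi.sub_apply, if_neg hnk, if_pos rfl] at h1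
  split_ifs at h1 <;> norm_num at h1

lemma A_inj {i j n : ℕ} (h : eps i - eps n = eps j - eps n) : i = j :=
  eps_inj (sub_left_inj.mp h)

-- characterization of SB elements
lemma sb_cases {n : ℕ} {x : ℕ → ℝ} (hx : x ∈ SB n) :
    (∃ i j, 1 ≤ i ∧ i < j ∧ j ≤ n ∧ x = eps i + eps j) ∨
    (∃ i, 1 ≤ i ∧ i ≤ n ∧ x = eps i) ∨
    (∃ i, 1 ≤ i ∧ i < n ∧ x = eps i - eps n) := by
  obtain ⟨hp, hr⟩ := hx
  rcases hp with ⟨i, j, hi, hij, hjn, (rfl|rfl)⟩ | ⟨i, hi, hin, rfl⟩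
  · right; right
    have : j = n := by
      by_contra hc
      exact hr ⟨i, j, hi, hij, by omega, rfl⟩
    subst this
    exact ⟨i, hi, hij, rfl⟩
  · exact Or.inl ⟨i, j, hi, hij, hjn, rfl⟩
  · exact Or.inr (Or.inl ⟨i, hi, hin, rfl⟩)



-- the permutation
attribute [local instance 10] Classical.propDecidable

def Mh (n : ℕ) : ℕ := (n-1) - (n-1) % 2
def hf (n : ℕ) : ℕ := Mh n / 2

lemma Mh_def (n : ℕ) : Mh n = (n-1) - (n-1) % 2 := rfl
lemma hf_def (n : ℕ) : hf n = ((n-1) - (n-1) % 2) / 2 := rfl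

noncomputable def Fp (n i j : ℕ) : ℕ → ℝ :=
  if j = n then eps i
  else if j ≤ Mh n then
    (if j - i = hf n then
       (if i = 1 then eps n
        else if (n-1) % 2 = 0 then eps i - eps n
        else eps (i+1) + eps (n-1))
     else if i ≤ hf n ∧ j ≤ hf n then eps (i + hf n) + eps (j + hf n)
     else if i ≤ hf n then eps (j - hf n) + eps (i + hf n)
     else eps (i - hf n) + eps (j - hf n))
  else
    (if 3 ≤ i ∧ i ≤ hf n + 1 then eps (i-1) + eps (i-1+hf n)
     else eps i - eps n)

noncomputable def Fs (n i : ℕ) : ℕ → ℝ :=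
  if i = n then eps 1 + eps (1 + hf n) else eps i + eps n

noncomputable def Fa (n i : ℕ) : ℕ → ℝ :=
  if (n-1) % 2 = 0 then
    (if 2 ≤ i ∧ i ≤ hf n then eps i + eps (i + hf n) else eps i - eps n)
  else
    (if (i ≤ 2 ∨ hf n + 2 ≤ i) ∧ i ≤ Mh n then eps i + eps (n-1) else eps i - eps n)

noncomputable def sig (n : ℕ) (x : ℕ → ℝ) : ℕ → ℝ :=
  if h : ∃ p : ℕ × ℕ, 1 ≤ p.1 ∧ p.1 < p.2 ∧ p.2 ≤ n ∧ x = eps p.1 + eps p.2 then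
    Fp n h.choose.1 h.choose.2
  else if h : ∃ i, 1 ≤ i ∧ i ≤ n ∧ x = eps i then Fs n h.choose
  else if h : ∃ i, 1 ≤ i ∧ i < n ∧ x = eps i - eps n then Fa n h.choose
  else x

lemma sig_pair {n i j : ℕ} (h1 : 1 ≤ i) (h2 : i < j) (h3 : j ≤ n) :
    sig n (eps i + eps j) = Fp n i j := by
  unfold sig
  have hex : ∃ p : ℕ × ℕ, 1 ≤ p.1 ∧ p.1 < p.2 ∧ p.2 ≤ n ∧
      eps i + eps j = eps p.1 + eps p.2 := ⟨(i,j), h1, h2, h3, rfl⟩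
  rw [dif_pos hex]
  obtain ⟨ha, hb, hc, heq⟩ := hex.choose_spec
  obtain ⟨e1, e2⟩ := pair_eq_pair h2 hb heq
  rw [← e1, ← e2]

lemma sig_single {n i : ℕ} (h1 : 1 ≤ i) (h2 : i ≤ n) : sig n (eps i) = Fs n i := by
  unfold sig
  have hnot : ¬ ∃ p : ℕ × ℕ, 1 ≤ p.1 ∧ p.1 < p.2 ∧ p.2 ≤ n ∧
      eps i = eps p.1 + eps p.2 := by
    rintro ⟨p, hp1, hp2, hp3, heq⟩; exact pair_ne_single hp2 heq.symm
  rw [dif_neg hnot]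
  have hex : ∃ k, 1 ≤ k ∧ k ≤ n ∧ eps i = eps k := ⟨i, h1, h2, rfl⟩
  rw [dif_pos hex]
  obtain ⟨ha, hb, heq⟩ := hex.choose_spec
  rw [← eps_inj heq]

lemma sig_A {n i : ℕ} (h1 : 1 ≤ i) (h2 : i < n) :
    sig n (eps i - eps n) = Fa n i := by
  unfold sig
  have hnot : ¬ ∃ p : ℕ × ℕ, 1 ≤ p.1 ∧ p.1 < p.2 ∧ p.2 ≤ n ∧
      eps i - eps n = eps p.1 + eps p.2 := by
    rintro ⟨p, hp1, hp2, hp3, heq⟩; exact pair_ne_A hp2 hp3 h2 heq.symm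
  rw [dif_neg hnot]
  have hnot2 : ¬ ∃ k, 1 ≤ k ∧ k ≤ n ∧ eps i - eps n = eps k := by
    rintro ⟨k, hk1, hk2, heq⟩; exact single_ne_A h2 heq.symm
  rw [dif_neg hnot2]
  have hex : ∃ k, 1 ≤ k ∧ k < n ∧ eps i - eps n = eps k - eps n := ⟨i, h1, h2, rfl⟩
  rw [dif_pos hex]
  obtain ⟨ha, hb, heq⟩ := hex.choose_spec
  rw [← A_inj heq]


lemma facts (n : ℕ) (hn : 3 ≤ n) :
    2 * hf n = Mh n ∧ Mh n ≤ n-1 ∧ 1 ≤ hf n ∧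
    ((n-1) % 2 = 0 → Mh n = n-1) ∧ ((n-1) % 2 = 1 → Mh n = n-2) := by
  simp only [Mh_def, hf_def]; omega

lemma invC {n i : ℕ} (h1 : 1 ≤ i) (h2 : i < n) :
    sig n (eps i + eps n) = eps i := by
  rw [sig_pair h1 h2 (le_refl n)]; unfold Fp; rw [if_pos rfl]

lemma invD {n i : ℕ} (h1 : 1 ≤ i) (h2 : i < n) :
    sig n (eps i) = eps i + eps n := by
  rw [sig_single h1 (le_of_lt h2)]; unfold Fs; rw [if_neg (by omega)]

lemma invDn {n : ℕ} (hn : 3 ≤ n) :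
    sig n (eps n) = eps 1 + eps (1 + hf n) := by
  rw [sig_single (by omega) (le_refl n)]; unfold Fs; rw [if_pos rfl]

lemma invA {n i : ℕ} (hn : 3 ≤ n) (h1 : 1 ≤ i) (h2 : i ≤ n-1) :
    sig n (eps i - eps n) = eps i - eps n ∨
    (∃ a b, 1 ≤ a ∧ a < b ∧ b ≤ n-1 ∧ (i = a ∨ i = b) ∧
      sig n (eps i - eps n) = eps a + eps b) := by
  obtain ⟨hM, hMn, hh, hev, hod⟩ := facts n hn
  rw [sig_A h1 (by omega)]
  unfold Fa
  by_cases hp : (n-1) % 2 = 0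
  · rw [if_pos hp]
    by_cases hc : 2 ≤ i ∧ i ≤ hf n
    · rw [if_pos hc]
      exact Or.inr ⟨i, i + hf n, h1, by omega, by omega, Or.inl rfl, rfl⟩
    · rw [if_neg hc]; exact Or.inl rfl
  · rw [if_neg hp]
    by_cases hc : (i ≤ 2 ∨ hf n + 2 ≤ i) ∧ i ≤ Mh n
    · rw [if_pos hc]
      have hp1 : (n-1) % 2 = 1 := by omega
      exact Or.inr ⟨i, n-1, h1, by omega, by omega, Or.inl rfl, rfl⟩
    · rw [if_neg hc]; exact Or.inl rfl

lemma invE {n i j : ℕ} (hn : 3 ≤ n) (h1 : 1 ≤ i) (h2 : i < j) (h3 : j ≤ n-1) :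
    (∃ a b, 1 ≤ a ∧ a < b ∧ b ≤ n-1 ∧ a ≠ i ∧ a ≠ j ∧ b ≠ i ∧ b ≠ j ∧
      sig n (eps i + eps j) = eps a + eps b) ∨
    (sig n (eps i + eps j) = eps n) ∨
    (∃ k, 1 ≤ k ∧ k ≤ n-1 ∧ (k = i ∨ k = j) ∧
      sig n (eps i + eps j) = eps k - eps n) := by
  obtain ⟨hM, hMn, hh, hev, hod⟩ := facts n hn
  rw [sig_pair h1 h2 (by omega)]
  unfold Fp
  rw [if_neg (by omega : ¬ j = n)]
  by_cases hj : j ≤ Mh n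
  · rw [if_pos hj]
    by_cases hd : j - i = hf n
    · rw [if_pos hd]
      by_cases hi1 : i = 1
      · rw [if_pos hi1]; exact Or.inr (Or.inl rfl)
      · rw [if_neg hi1]
        by_cases hp : (n-1) % 2 = 0
        · rw [if_pos hp]
          exact Or.inr (Or.inr ⟨i, h1, by omega, Or.inl rfl, rfl⟩)
        · rw [if_neg hp]
          have hp1 : (n-1) % 2 = 1 := by omega
          exact Or.inl ⟨i+1, n-1, by omega, by omega, by omega, by omega,
            by omega, by omega, by omega, rfl⟩
    · rw [if_neg hd]
      by_cases hc1 : i ≤ hf n ∧ j ≤ hf n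
      · rw [if_pos hc1]
        exact Or.inl ⟨i + hf n, j + hf n, by omega, by omega, by omega, by omega,
          by omega, by omega, by omega, rfl⟩
      · by_cases hc2 : i ≤ hf n
        · rw [if_neg hc1, if_pos hc2]
          exact Or.inl ⟨j - hf n, i + hf n, by omega, by omega, by omega, by omega,
            by omega, by omega, by omega, rfl⟩
        · rw [if_neg hc1, if_neg hc2]
          exact Or.inl ⟨i - hf n, j - hf n, by omega, by omega, by omega, by omega,
            by omega, by omega, by omega, rfl⟩
  · rw [if_neg hj]
    by_cases hc : 3 ≤ i ∧ i ≤ hf n + 1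
    · rw [if_pos hc]
      exact Or.inl ⟨i-1, i-1+hf n, by omega, by omega, by omega, by omega,
        by omega, by omega, by omega, rfl⟩
    · rw [if_neg hc]
      exact Or.inr (Or.inr ⟨i, h1, by omega, Or.inl rfl, rfl⟩)


lemma sig_mem {n : ℕ} (hn : 3 ≤ n) {x : ℕ → ℝ} (hx : x ∈ SB n) : sig n x ∈ SB n := by
  obtain ⟨hM, hMn, hh, hev, hod⟩ := facts n hn
  rcases sb_cases hx with ⟨i, j, h1, h2, h3, rfl⟩ | ⟨i, h1, h2, rfl⟩ | ⟨i, h1, h2, rfl⟩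
  · rcases eq_or_ne j n with rfl|hjn
    · rw [invC h1 h2]; exact mem_single h1 (by omega)
    · rcases invE hn h1 h2 (by omega) with ⟨a, b, ha, hab, hbn, _, _, _, _, heq⟩ |
        heq | ⟨k, hk1, hk2, _, heq⟩
      · rw [heq]; exact mem_pair ha hab (by omega)
      · rw [heq]; exact mem_single (by omega) (le_refl n)
      · rw [heq]; exact mem_A hk1 (by omega)
  · rcases eq_or_ne i n with rfl|hin
    · rw [invDn hn]; exact mem_pair (by omega) (by omega) (by omega)
    · rw [invD h1 (by omega)]; exact mem_pair h1 (by omega) (le_refl n)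
  · rcases invA hn h1 (by omega) with heq | ⟨a, b, ha, hab, hbn, _, heq⟩
    · rw [heq]; exact mem_A h1 h2
    · rw [heq]; exact mem_pair ha hab (by omega)

lemma sig_sig {n : ℕ} (hn : 3 ≤ n) {x : ℕ → ℝ} (hx : x ∈ SB n) :
    sig n (sig n x) = x := by
  obtain ⟨hM, hMn, hh, hev, hod⟩ := facts n hn
  rcases sb_cases hx with ⟨i, j, h1, h2, h3, rfl⟩ | ⟨i, h1, h2, rfl⟩ | ⟨i, h1, h2, rfl⟩
  · rcases eq_or_ne j n with rfl|hjn
    · rw [invC h1 h2, invD h1 h2]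
    · have h3' : j ≤ n - 1 := by omega
      rw [sig_pair h1 h2 h3]
      unfold Fp
      rw [if_neg hjn]
      by_cases hj : j ≤ Mh n
      · rw [if_pos hj]
        by_cases hd : j - i = hf n
        · rw [if_pos hd]
          by_cases hi1 : i = 1
          · rw [if_pos hi1]
            rw [invDn hn]
            subst hi1
            rw [show 1 + hf n = j from by simp only [Mh_def, hf_def] at *; omega]
          · rw [if_neg hi1]
            by_cases hp : (n-1) % 2 = 0
            · rw [if_pos hp]
              rw [sig_A h1 (by omega)]
              unfold Fa
              rw [if_pos hp, if_pos (show 2 ≤ i ∧ i ≤ hf n from by simp only [Mh_def, hf_def] at *; omega)]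
              rw [show i + hf n = j from by simp only [Mh_def, hf_def] at *; omega]
            · rw [if_neg hp]
              rw [sig_pair (show 1 ≤ i + 1 from by omega)
                (show i + 1 < n - 1 from by simp only [Mh_def, hf_def] at *; omega) (show n - 1 ≤ n from by omega)]
              unfold Fp
              rw [if_neg (show ¬ n - 1 = n from by omega),
                if_neg (show ¬ n - 1 ≤ Mh n from by simp only [Mh_def, hf_def] at *; omega),
                if_pos (show 3 ≤ i + 1 ∧ i + 1 ≤ hf n + 1 from by simp only [Mh_def, hf_def] at *; omega)]
              rw [show i + 1 - 1 = i from by omega]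
              rw [show i + hf n = j from by simp only [Mh_def, hf_def] at *; omega]
        · rw [if_neg hd]
          by_cases hc1 : i ≤ hf n ∧ j ≤ hf n
          · rw [if_pos hc1]
            rw [sig_pair (show 1 ≤ i + hf n from by omega)
              (show i + hf n < j + hf n from by omega) (show j + hf n ≤ n from by simp only [Mh_def, hf_def] at *; omega)]
            unfold Fp
            rw [if_neg (show ¬ j + hf n = n from by simp only [Mh_def, hf_def] at *; omega),
              if_pos (show j + hf n ≤ Mh n from by simp only [Mh_def, hf_def] at *; omega),
              if_neg (show ¬ j + hf n - (i + hf n) = hf n from by simp only [Mh_def, hf_def] at *; omega),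
              if_neg (show ¬ (i + hf n ≤ hf n ∧ j + hf n ≤ hf n) from by simp only [Mh_def, hf_def] at *; omega),
              if_neg (show ¬ i + hf n ≤ hf n from by simp only [Mh_def, hf_def] at *; omega)]
            rw [show i + hf n - hf n = i from by omega, show j + hf n - hf n = j from by omega]
          · by_cases hc2 : i ≤ hf n
            · rw [if_neg hc1, if_pos hc2]
              rw [sig_pair (show 1 ≤ j - hf n from by simp only [Mh_def, hf_def] at *; omega)
                (show j - hf n < i + hf n from by simp only [Mh_def, hf_def] at *; omega) (show i + hf n ≤ n from by simp only [Mh_def, hf_def] at *; omega)]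
              unfold Fp
              rw [if_neg (show ¬ i + hf n = n from by simp only [Mh_def, hf_def] at *; omega),
                if_pos (show i + hf n ≤ Mh n from by simp only [Mh_def, hf_def] at *; omega),
                if_neg (show ¬ i + hf n - (j - hf n) = hf n from by simp only [Mh_def, hf_def] at *; omega),
                if_neg (show ¬ (j - hf n ≤ hf n ∧ i + hf n ≤ hf n) from by simp only [Mh_def, hf_def] at *; omega),
                if_pos (show j - hf n ≤ hf n from by simp only [Mh_def, hf_def] at *; omega)]
              rw [show i + hf n - hf n = i from by omega, show j - hf n + hf n = j from by simp only [Mh_def, hf_def] at *; omega]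
            · rw [if_neg hc1, if_neg hc2]
              rw [sig_pair (show 1 ≤ i - hf n from by simp only [Mh_def, hf_def] at *; omega)
                (show i - hf n < j - hf n from by simp only [Mh_def, hf_def] at *; omega) (show j - hf n ≤ n from by simp only [Mh_def, hf_def] at *; omega)]
              unfold Fp
              rw [if_neg (show ¬ j - hf n = n from by simp only [Mh_def, hf_def] at *; omega),
                if_pos (show j - hf n ≤ Mh n from by simp only [Mh_def, hf_def] at *; omega),
                if_neg (show ¬ j - hf n - (i - hf n) = hf n from by simp only [Mh_def, hf_def] at *; omega),
                if_pos (show i - hf n ≤ hf n ∧ j - hf n ≤ hf n from by simp only [Mh_def, hf_def] at *; omega)]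
              rw [show i - hf n + hf n = i from by simp only [Mh_def, hf_def] at *; omega, show j - hf n + hf n = j from by simp only [Mh_def, hf_def] at *; omega]
      · rw [if_neg hj]
        have hjm : j = n - 1 := by simp only [Mh_def, hf_def] at *; omega
        have hp1 : (n-1) % 2 = 1 := by simp only [Mh_def, hf_def] at *; omega
        by_cases hc : 3 ≤ i ∧ i ≤ hf n + 1
        · rw [if_pos hc]
          rw [sig_pair (show 1 ≤ i - 1 from by omega)
            (show i - 1 < i - 1 + hf n from by omega) (show i - 1 + hf n ≤ n from by simp only [Mh_def, hf_def] at *; omega)]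
          unfold Fp
          rw [if_neg (show ¬ i - 1 + hf n = n from by simp only [Mh_def, hf_def] at *; omega),
            if_pos (show i - 1 + hf n ≤ Mh n from by simp only [Mh_def, hf_def] at *; omega),
            if_pos (show i - 1 + hf n - (i - 1) = hf n from by omega),
            if_neg (show ¬ i - 1 = 1 from by omega),
            if_neg (show ¬ (n-1) % 2 = 0 from by omega)]
          rw [show i - 1 + 1 = i from by omega, show n - 1 = j from by omega]
        · rw [if_neg hc]
          rw [sig_A h1 (by omega)]
          unfold Fa
          rw [if_neg (show ¬ (n-1) % 2 = 0 from by omega),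
            if_pos (show (i ≤ 2 ∨ hf n + 2 ≤ i) ∧ i ≤ Mh n from by simp only [Mh_def, hf_def] at *; omega)]
          rw [show n - 1 = j from by omega]
  · rcases eq_or_ne i n with hin|hin
    · rw [hin, invDn hn]
      rw [sig_pair (show (1:ℕ) ≤ 1 from le_refl 1)
        (show 1 < 1 + hf n from by omega) (show 1 + hf n ≤ n from by simp only [Mh_def, hf_def] at *; omega)]
      unfold Fp
      rw [if_neg (show ¬ 1 + hf n = n from by simp only [Mh_def, hf_def] at *; omega),
        if_pos (show 1 + hf n ≤ Mh n from by simp only [Mh_def, hf_def] at *; omega),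
        if_pos (show 1 + hf n - 1 = hf n from by omega), if_pos rfl]
    · rw [invD h1 (by omega), invC h1 (by omega)]
  · rw [sig_A h1 (by omega)]
    unfold Fa
    by_cases hp : (n-1) % 2 = 0
    · rw [if_pos hp]
      by_cases hc : 2 ≤ i ∧ i ≤ hf n
      · rw [if_pos hc]
        rw [sig_pair (show 1 ≤ i from h1) (show i < i + hf n from by omega)
          (show i + hf n ≤ n from by simp only [Mh_def, hf_def] at *; omega)]
        unfold Fp
        rw [if_neg (show ¬ i + hf n = n from by simp only [Mh_def, hf_def] at *; omega),
          if_pos (show i + hf n ≤ Mh n from by simp only [Mh_def, hf_def] at *; omega),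
          if_pos (show i + hf n - i = hf n from by omega),
          if_neg (show ¬ i = 1 from by omega), if_pos hp]
      · rw [if_neg hc]
        rw [sig_A h1 (by omega)]
        unfold Fa
        rw [if_pos hp, if_neg hc]
    · rw [if_neg hp]
      by_cases hc : (i ≤ 2 ∨ hf n + 2 ≤ i) ∧ i ≤ Mh n
      · rw [if_pos hc]
        rw [sig_pair (show 1 ≤ i from h1) (show i < n - 1 from by simp only [Mh_def, hf_def] at *; omega)
          (show n - 1 ≤ n from by omega)]
        unfold Fp
        rw [if_neg (show ¬ n - 1 = n from by omega),
          if_neg (show ¬ n - 1 ≤ Mh n from by simp only [Mh_def, hf_def] at *; omega),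
          if_neg (show ¬ (3 ≤ i ∧ i ≤ hf n + 1) from by simp only [Mh_def, hf_def] at *; omega)]
      · rw [if_neg hc]
        rw [sig_A h1 (by omega)]
        unfold Fa
        rw [if_neg hp, if_neg hc]


-- sums of shapes that are never positive roots
lemma sum_pp {n i j k l : ℕ} (hij : i < j) (hkl : k < l) :
    (eps i + eps j) + (eps k + eps l) ∉ PiPlusB n := by
  by_cases h1 : i = k
  · subst h1
    refine notin_two (k := i) ?_
    have e1 : i ≠ j := by omega
    have e2 : i ≠ l := by omega
    norm_num [eps_apply, Pi.add_apply, e1, e2]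
  · by_cases h2 : i = l
    · subst h2
      refine notin_two (k := i) ?_
      have e1 : i ≠ j := by omega
      have e2 : i ≠ k := by omega
      norm_num [eps_apply, Pi.add_apply, e1, e2]
    · by_cases h3 : j = k
      · subst h3
        refine notin_two (k := j) ?_
        have e1 : j ≠ i := by omega
        have e2 : j ≠ l := by omega
        norm_num [eps_apply, Pi.add_apply, e1, e2]
      · by_cases h4 : j = l
        · subst h4
          refine notin_two (k := j) ?_
          have e1 : j ≠ i := by omega
          have e2 : j ≠ k := by omega
          norm_num [eps_apply, Pi.add_apply, e1, e2]
        · refine notin_three (a := i) (b := j) (c := k) hij.ne (by omega) (by omega) ?_ ?_ ?_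
          · have e1 : i ≠ j := by omega
            norm_num [eps_apply, Pi.add_apply, e1, h1, h2]
          · have e1 : j ≠ i := by omega
            norm_num [eps_apply, Pi.add_apply, e1, h3, h4]
          · have e1 : k ≠ i := by omega
            have e2 : k ≠ j := by omega
            have e3 : k ≠ l := by omega
            norm_num [eps_apply, Pi.add_apply, e1, e2, e3]

lemma sum_ps {n i j k : ℕ} (hij : i < j) :
    (eps i + eps j) + eps k ∉ PiPlusB n := by
  by_cases h1 : k = i
  · subst h1
    refine notin_two (k := k) ?_
    have e1 : k ≠ j := by omega
    norm_num [eps_apply, Pi.add_apply, e1]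
  · by_cases h2 : k = j
    · subst h2
      refine notin_two (k := k) ?_
      have e1 : k ≠ i := by omega
      norm_num [eps_apply, Pi.add_apply, e1]
    · refine notin_three (a := i) (b := j) (c := k) hij.ne (by omega) (by omega) ?_ ?_ ?_
      · have e1 : i ≠ j := by omega
        have e2 : i ≠ k := by omega
        norm_num [eps_apply, Pi.add_apply, e1, e2]
      · have e1 : j ≠ i := by omega
        have e2 : j ≠ k := by omega
        norm_num [eps_apply, Pi.add_apply, e1, e2]
      · norm_num [eps_apply, Pi.add_apply, h1, h2]

lemma sum_pa {n i j k : ℕ} (hij : i < j) (hjn : j < n) (hkn : k < n) :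
    (eps i + eps j) + (eps k - eps n) ∉ PiPlusB n := by
  refine notin_three (a := i) (b := j) (c := n) hij.ne (by omega) (by omega) ?_ ?_ ?_
  · have e1 : i ≠ j := by omega
    have e2 : i ≠ n := by omega
    by_cases h : i = k
    · subst h; norm_num [eps_apply, Pi.add_apply, Pi.sub_apply, e1, e2]
    · norm_num [eps_apply, Pi.add_apply, Pi.sub_apply, e1, e2, h]
  · have e1 : j ≠ i := by omega
    have e2 : j ≠ n := by omega
    by_cases h : j = k
    · subst h; norm_num [eps_apply, Pi.add_apply, Pi.sub_apply, e1, e2]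
    · norm_num [eps_apply, Pi.add_apply, Pi.sub_apply, e1, e2, h]
  · have e1 : n ≠ i := by omega
    have e2 : n ≠ j := by omega
    have e3 : n ≠ k := by omega
    norm_num [eps_apply, Pi.add_apply, Pi.sub_apply, e1, e2, e3]

lemma sum_sa3 {n i k : ℕ} (hik : i ≠ k) (hin : i < n) (hkn : k < n) :
    eps i + (eps k - eps n) ∉ PiPlusB n := by
  refine notin_three (a := i) (b := k) (c := n) hik (by omega) (by omega) ?_ ?_ ?_
  · have e1 : i ≠ n := by omega
    norm_num [eps_apply, Pi.add_apply, Pi.sub_apply, hik, e1]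
  · have e1 : k ≠ i := by omega
    have e2 : k ≠ n := by omega
    norm_num [eps_apply, Pi.add_apply, Pi.sub_apply, e1, e2]
  · have e1 : n ≠ i := by omega
    have e2 : n ≠ k := by omega
    norm_num [eps_apply, Pi.add_apply, Pi.sub_apply, e1, e2]

lemma sum_cond {n : ℕ} (hn : 3 ≤ n) {γ δ : ℕ → ℝ} (hγ : γ ∈ SB n) (hδ : δ ∈ SB n)
    (hs : γ + δ ∈ PiPlusB n) : sig n γ + sig n δ ∉ PiPlusB n := by
  obtain ⟨hM, hMn, hh, hev, hod⟩ := facts n hn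
  rcases sb_cases hγ with ⟨i, j, gi1, gij, gjn, rfl⟩ | ⟨i, gi1, gin, rfl⟩ | ⟨i, gi1, gin, rfl⟩ <;>
    rcases sb_cases hδ with ⟨k, l, dk1, dkl, dln, rfl⟩ | ⟨k, dk1, dkn, rfl⟩ | ⟨k, dk1, dkn, rfl⟩
  · exact absurd hs (sum_pp gij dkl)
  · exact absurd hs (sum_ps gij)
  · -- pair + A
    by_cases hjn : j = n
    · by_cases hik : i = k
      · refine absurd hs (notin_two (k := i) ?_)
        have e1 : i ≠ n := by omega
        rw [hjn, ← hik]
        norm_num [eps_apply, Pi.add_apply, Pi.sub_apply, e1]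
      · rw [hjn, invC gi1 (by omega)]
        rcases invA hn dk1 (by omega) with heq | ⟨a, b, ha, hab, hbn, hor, heq⟩
        · rw [heq]; exact sum_sa3 hik (by omega) (by omega)
        · rw [heq, add_comm]; exact sum_ps hab
    · exact absurd hs (sum_pa gij (by omega) (by omega))
  · rw [add_comm] at hs ⊢; exact absurd hs (sum_ps dkl)
  · -- single + single
    by_cases hik : i = k
    · refine absurd hs (notin_two (k := i) ?_)
      rw [← hik]
      norm_num [eps_apply, Pi.add_apply]
    · by_cases hin : i = n
      · by_cases hkn : k = n
        · omega
        · rw [hin, invDn hn, invD dk1 (by omega)]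
          exact sum_pp (by omega) (by omega)
      · by_cases hkn : k = n
        · rw [hkn, invD gi1 (by omega), invDn hn]
          exact sum_pp (by omega) (by omega)
        · rw [invD gi1 (by omega), invD dk1 (by omega)]
          exact sum_pp (by omega) (by omega)
  · -- single + A
    by_cases hin : i = n
    · rw [hin, invDn hn]
      rcases invA hn dk1 (by omega) with heq | ⟨a, b, ha, hab, hbn, hor, heq⟩
      · rw [heq]
        refine sum_pa (by omega) ?_ (by omega)
        simp only [Mh_def, hf_def] at *; omega
      · rw [heq]; exact sum_pp (by omega) hab
    · by_cases hki : k = i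
      · refine absurd hs (notin_two (k := i) ?_)
        have e1 : i ≠ n := by omega
        rw [hki]
        norm_num [eps_apply, Pi.add_apply, Pi.sub_apply, e1]
      · exact absurd hs (sum_sa3 (by omega) (by omega) (by omega))
  · -- A + pair
    by_cases hln : l = n
    · by_cases hik : k = i
      · refine absurd hs (notin_two (k := i) ?_)
        have e1 : i ≠ n := by omega
        rw [hln, hik]
        norm_num [eps_apply, Pi.add_apply, Pi.sub_apply, e1]
      · rw [hln, invC dk1 (by omega)]
        rcases invA hn gi1 (by omega) with heq | ⟨a, b, ha, hab, hbn, hor, heq⟩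
        · rw [heq, add_comm]; exact sum_sa3 (by omega) (by omega) (by omega)
        · rw [heq]; exact sum_ps hab
    · rw [add_comm] at hs ⊢
      exact absurd hs (sum_pa dkl (by omega) (by omega))
  · -- A + single
    by_cases hkn : k = n
    · rw [hkn, invDn hn]
      rcases invA hn gi1 (by omega) with heq | ⟨a, b, ha, hab, hbn, hor, heq⟩
      · rw [heq, add_comm]
        refine sum_pa (by omega) ?_ (by omega)
        simp only [Mh_def, hf_def] at *; omega
      · rw [heq]; exact sum_pp hab (by omega)
    · by_cases hik : i = k
      · refine absurd hs (notin_two (k := i) ?_)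
        have e1 : i ≠ n := by omega
        rw [← hik]
        norm_num [eps_apply, Pi.add_apply, Pi.sub_apply, e1]
      · rw [add_comm] at hs ⊢
        exact absurd hs (sum_sa3 (by omega) (by omega) (by omega))
  · -- A + A
    refine absurd hs (notin_negtwo (k := n) ?_)
    have e1 : n ≠ i := by omega
    have e2 : n ≠ k := by omega
    norm_num [eps_apply, Pi.add_apply, Pi.sub_apply, e1, e2]


-- difference exclusion helpers
lemma diff_pp {n a b c d : ℕ} (hab : a < b) (hcd : c < d) (hcn : c < n) (hdn : d < n) :
    (eps a + eps b) - (eps c + eps d) ∉ SB n := by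
  by_cases h1 : c = a
  · by_cases h2 : d = b
    · subst h1; subst h2
      refine notin_sb_nonpos fun t => ?_
      simp only [eps_apply, Pi.add_apply, Pi.sub_apply]
      split_ifs <;> norm_num
    · refine notin_sb_neg (k := d) ?_ (by omega)
      have e1 : d ≠ a := by omega
      have e2 : d ≠ c := by omega
      norm_num [eps_apply, Pi.add_apply, Pi.sub_apply, e1, e2, h2]
  · by_cases h2 : c = b
    · refine notin_sb_neg (k := d) ?_ (by omega)
      have e1 : d ≠ a := by omega
      have e2 : d ≠ b := by omega
      have e3 : d ≠ c := by omega
      norm_num [eps_apply, Pi.add_apply, Pi.sub_apply, e1, e2, e3]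
    · refine notin_sb_neg (k := c) ?_ (by omega)
      have e1 : c ≠ d := by omega
      norm_num [eps_apply, Pi.add_apply, Pi.sub_apply, h1, h2, e1]

lemma diff_ps {n a b c : ℕ} (hca : c ≠ a) (hcb : c ≠ b) (hcn : c < n) :
    (eps a + eps b) - eps c ∉ SB n := by
  refine notin_sb_neg (k := c) ?_ (by omega)
  have e1 : c ≠ a := hca
  norm_num [eps_apply, Pi.add_apply, Pi.sub_apply, e1, hcb]

lemma diff_sp {n a b c : ℕ} (hab : a < b) (han : a < n) (hbn : b < n) :
    eps c - (eps a + eps b) ∉ SB n := by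
  by_cases h1 : c = a
  · refine notin_sb_neg (k := b) ?_ (by omega)
    have e1 : b ≠ c := by omega
    have e2 : b ≠ a := by omega
    norm_num [eps_apply, Pi.add_apply, Pi.sub_apply, e1, e2]
  · refine notin_sb_neg (k := a) ?_ (by omega)
    have e1 : a ≠ c := by omega
    have e2 : a ≠ b := by omega
    norm_num [eps_apply, Pi.add_apply, Pi.sub_apply, e1, e2]

lemma diff_aa {n i k : ℕ} (hin : i < n) :
    (eps k - eps n) - (eps i - eps n) ∉ SB n := by
  by_cases h : k = i
  · subst h
    refine notin_sb_nonpos fun t => ?_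
    simp only [eps_apply, Pi.sub_apply]
    split_ifs <;> norm_num
  · refine notin_sb_neg (k := i) ?_ (by omega)
    have e1 : i ≠ k := by omega
    have e2 : i ≠ n := by omega
    norm_num [eps_apply, Pi.sub_apply, e1, e2]

lemma diff_ae {n t c d : ℕ} (hcd : c < d) (hcn : c < n) (hdn : d < n) :
    (eps t - eps n) - (eps c + eps d) ∉ SB n := by
  by_cases h : t = c
  · refine notin_sb_neg (k := d) ?_ (by omega)
    have e1 : d ≠ t := by omega
    have e2 : d ≠ n := by omega
    have e3 : d ≠ c := by omega
    norm_num [eps_apply, Pi.add_apply, Pi.sub_apply, e1, e2, e3]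
  · refine notin_sb_neg (k := c) ?_ (by omega)
    have e1 : c ≠ t := by omega
    have e2 : c ≠ n := by omega
    have e3 : c ≠ d := by omega
    norm_num [eps_apply, Pi.add_apply, Pi.sub_apply, e1, e2, e3]

lemma diff_ea {n a b i : ℕ} (hab : a < b) (hbn : b < n) (hia : i ≠ a) (hib : i ≠ b)
    (hin : i < n) : (eps a + eps b) - (eps i - eps n) ∉ SB n := by
  refine notin_sb_three (a := a) (b := b) (c := i) hab.ne (by omega) (by omega) ?_ ?_ ?_
  · have e1 : a ≠ b := by omega
    have e2 : a ≠ i := by omega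
    have e3 : a ≠ n := by omega
    norm_num [eps_apply, Pi.add_apply, Pi.sub_apply, e1, e2, e3]
  · have e1 : b ≠ a := by omega
    have e2 : b ≠ i := by omega
    have e3 : b ≠ n := by omega
    norm_num [eps_apply, Pi.add_apply, Pi.sub_apply, e1, e2, e3]
  · have e1 : i ≠ a := hia
    have e2 : i ≠ n := by omega
    norm_num [eps_apply, Pi.add_apply, Pi.sub_apply, e1, hib, e2]

lemma diff_ss {n c k : ℕ} (hkn : k < n) : eps c - eps k ∉ SB n := by
  by_cases h : c = k
  · subst h
    refine notin_sb_nonpos fun t => ?_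
    simp only [eps_apply, Pi.sub_apply]
    split_ifs <;> norm_num
  · refine notin_sb_neg (k := k) ?_ (by omega)
    have e1 : k ≠ c := by omega
    norm_num [eps_apply, Pi.sub_apply, e1]


lemma diff_as {n t c : ℕ} (hcn : c < n) : (eps t - eps n) - eps c ∉ SB n := by
  by_cases h : t = c
  · subst h
    refine notin_sb_nonpos fun s => ?_
    simp only [eps_apply, Pi.sub_apply]
    split_ifs <;> norm_num
  · refine notin_sb_neg (k := c) ?_ (by omega)
    have e1 : c ≠ t := by omega
    have e2 : c ≠ n := by omega
    norm_num [eps_apply, Pi.sub_apply, e1, e2]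

lemma zero_diff {n : ℕ} {x : ℕ → ℝ} : x - x ∉ SB n := by
  refine notin_sb_nonpos fun s => ?_
  simp [Pi.sub_apply]

lemma diff_cond {n : ℕ} (hn : 3 ≤ n) {γ δ : ℕ → ℝ} (hγ : γ ∈ SB n) (hδ : δ ∈ SB n)
    (hd : δ - γ ∈ SB n) : sig n δ - sig n γ ∉ SB n := by
  obtain ⟨hM, hMn, hh, hev, hod⟩ := facts n hn
  rcases sb_cases hγ with ⟨i, j, gi1, gij, gjn, rfl⟩ | ⟨i, gi1, gin, rfl⟩ | ⟨i, gi1, gin, rfl⟩ <;>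
    rcases sb_cases hδ with ⟨k, l, dk1, dkl, dln, rfl⟩ | ⟨k, dk1, dkn, rfl⟩ | ⟨k, dk1, dkn, rfl⟩
  · -- pair minus pair
    by_cases hjn : j = n
    · by_cases hln : l = n
      · -- C_k - C_i
        by_cases hki : k = i
        · refine absurd hd ?_
          rw [hjn, hln, hki]
          exact zero_diff
        · refine absurd hd (notin_sb_neg (k := i) ?_ (by omega))
          have e1 : i ≠ k := by omega
          have e2 : i ≠ n := by omega
          rw [hjn, hln]
          norm_num [eps_apply, Pi.add_apply, Pi.sub_apply, e1, e2]
      · -- E(k,l) - C_i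
        by_cases hmem : i = k ∨ i = l
        · rw [hjn, invC gi1 (by omega)]
          rcases invE hn dk1 dkl (by omega) with
            ⟨a, b, ha, hab, hbn, hak, hal, hbk, hbl, hE⟩ | hE | ⟨t, ht1, ht2, htor, hE⟩
          · rw [hE]; exact diff_ps (by omega) (by omega) (by omega)
          · rw [hE]; exact diff_ss (by omega)
          · rw [hE]; exact diff_as (by omega)
        · refine absurd hd (notin_sb_neg (k := i) ?_ (by omega))
          have e1 : i ≠ k := by omega
          have e2 : i ≠ l := by omega
          have e3 : i ≠ n := by omega
          rw [hjn]
          norm_num [eps_apply, Pi.add_apply, Pi.sub_apply, e1, e2, e3]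
    · -- δ pair minus E(i,j) : always impossible
      by_cases hik : i = k
      · by_cases hjl : j = l
        · refine absurd hd ?_
          rw [hik, hjl]
          exact zero_diff
        · refine absurd hd (notin_sb_neg (k := j) ?_ (by omega))
          have e1 : j ≠ k := by omega
          have e2 : j ≠ l := by omega
          have e3 : j ≠ i := by omega
          norm_num [eps_apply, Pi.add_apply, Pi.sub_apply, e1, e2, e3]
      · by_cases hil : i = l
        · refine absurd hd (notin_sb_neg (k := j) ?_ (by omega))
          have e1 : j ≠ k := by omega
          have e2 : j ≠ l := by omega
          have e3 : j ≠ i := by omega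
          norm_num [eps_apply, Pi.add_apply, Pi.sub_apply, e1, e2, e3]
        · refine absurd hd (notin_sb_neg (k := i) ?_ (by omega))
          have e1 : i ≠ k := hik
          have e2 : i ≠ l := hil
          have e3 : i ≠ j := by omega
          norm_num [eps_apply, Pi.add_apply, Pi.sub_apply, e1, e2, e3]
  · -- single minus pair
    by_cases hjn : j = n
    · by_cases hkn : k = n
      · refine absurd hd (notin_sb_nonpos fun t => ?_)
        rw [hjn, hkn]
        simp only [eps_apply, Pi.add_apply, Pi.sub_apply]
        split_ifs <;> norm_num
      · by_cases hki : k = i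
        · refine absurd hd (notin_sb_nonpos fun t => ?_)
          rw [hjn, hki]
          simp only [eps_apply, Pi.add_apply, Pi.sub_apply]
          split_ifs <;> norm_num
        · refine absurd hd (notin_sb_neg (k := i) ?_ (by omega))
          have e1 : i ≠ k := by omega
          have e2 : i ≠ n := by omega
          rw [hjn]
          norm_num [eps_apply, Pi.add_apply, Pi.sub_apply, e1, e2]
    · by_cases hki : k = i
      · refine absurd hd (notin_sb_neg (k := j) ?_ (by omega))
        have e1 : j ≠ k := by omega
        have e2 : j ≠ i := by omega
        norm_num [eps_apply, Pi.add_apply, Pi.sub_apply, e1, e2]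
      · refine absurd hd (notin_sb_neg (k := i) ?_ (by omega))
        have e1 : i ≠ k := by omega
        have e2 : i ≠ j := by omega
        norm_num [eps_apply, Pi.add_apply, Pi.sub_apply, e1, e2]
  · -- A_k minus pair
    by_cases hjn : j = n
    · refine absurd hd (notin_sb_negtwo (k := n) ?_)
      have e1 : n ≠ k := by omega
      have e2 : n ≠ i := by omega
      rw [hjn]
      norm_num [eps_apply, Pi.add_apply, Pi.sub_apply, e1, e2]
    · by_cases hki : k = i
      · refine absurd hd (notin_sb_neg (k := j) ?_ (by omega))
        have e1 : j ≠ k := by omega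
        have e2 : j ≠ n := by omega
        have e3 : j ≠ i := by omega
        norm_num [eps_apply, Pi.add_apply, Pi.sub_apply, e1, e2, e3]
      · refine absurd hd (notin_sb_neg (k := i) ?_ (by omega))
        have e1 : i ≠ k := by omega
        have e2 : i ≠ n := by omega
        have e3 : i ≠ j := by omega
        norm_num [eps_apply, Pi.add_apply, Pi.sub_apply, e1, e2, e3]
  · -- pair minus single
    by_cases hin : i = n
    · by_cases hln : l = n
      · rw [hin, hln, invDn hn, invC dk1 (by omega)]
        refine diff_sp (by omega) (by omega) ?_
        simp only [Mh_def, hf_def] at *; omega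
      · refine absurd hd (notin_sb_three (a := k) (b := l) (c := n)
          (by omega) (by omega) (by omega) ?_ ?_ ?_)
        · have e1 : k ≠ l := by omega
          have e2 : k ≠ n := by omega
          rw [hin]
          norm_num [eps_apply, Pi.add_apply, Pi.sub_apply, e1, e2]
        · have e1 : l ≠ k := by omega
          have e2 : l ≠ n := by omega
          rw [hin]
          norm_num [eps_apply, Pi.add_apply, Pi.sub_apply, e1, e2]
        · have e1 : n ≠ k := by omega
          have e2 : n ≠ l := by omega
          rw [hin]
          norm_num [eps_apply, Pi.add_apply, Pi.sub_apply, e1, e2]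
    · by_cases hln : l = n
      · by_cases hki : k = i
        · rw [hln, hki, invC gi1 (by omega), invD gi1 (by omega)]
          refine notin_sb_nonpos fun t => ?_
          simp only [eps_apply, Pi.add_apply, Pi.sub_apply]
          split_ifs <;> norm_num
        · refine absurd hd (notin_sb_neg (k := i) ?_ (by omega))
          have e1 : i ≠ k := by omega
          have e2 : i ≠ n := by omega
          rw [hln]
          norm_num [eps_apply, Pi.add_apply, Pi.sub_apply, e1, e2]
      · by_cases hmem : i = k ∨ i = l
        · rw [invD gi1 (by omega)]
          rcases invE hn dk1 dkl (by omega) with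
            ⟨a, b, ha, hab, hbn, hak, hal, hbk, hbl, hE⟩ | hE | ⟨t, ht1, ht2, htor, hE⟩
          · rw [hE]
            refine notin_sb_neg (k := i) ?_ (by omega)
            have e1 : i ≠ a := by omega
            have e2 : i ≠ b := by omega
            have e3 : i ≠ n := by omega
            norm_num [eps_apply, Pi.add_apply, Pi.sub_apply, e1, e2, e3]
          · rw [hE]
            refine notin_sb_nonpos fun t => ?_
            simp only [eps_apply, Pi.add_apply, Pi.sub_apply]
            split_ifs <;> norm_num
          · rw [hE]
            refine notin_sb_negtwo (k := n) ?_
            have e1 : n ≠ t := by omega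
            have e2 : n ≠ i := by omega
            norm_num [eps_apply, Pi.add_apply, Pi.sub_apply, e1, e2]
        · refine absurd hd (notin_sb_neg (k := i) ?_ (by omega))
          have e1 : i ≠ k := by omega
          have e2 : i ≠ l := by omega
          norm_num [eps_apply, Pi.add_apply, Pi.sub_apply, e1, e2]
  · -- single minus single
    by_cases hin : i = n
    · by_cases hkn : k = n
      · refine absurd hd ?_
        rw [hin, hkn]
        exact zero_diff
      · rw [hin, invDn hn, invD dk1 (by omega)]
        refine diff_pp (by omega) (by omega) (by omega) ?_
        simp only [Mh_def, hf_def] at *; omega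
    · by_cases hki : k = i
      · refine absurd hd ?_
        rw [hki]
        exact zero_diff
      · refine absurd hd (notin_sb_neg (k := i) ?_ (by omega))
        have e1 : i ≠ k := by omega
        norm_num [eps_apply, Pi.sub_apply, e1]
  · -- A_k minus single
    by_cases hin : i = n
    · refine absurd hd (notin_sb_negtwo (k := n) ?_)
      have e1 : n ≠ k := by omega
      rw [hin]
      norm_num [eps_apply, Pi.sub_apply, e1]
    · by_cases hki : k = i
      · refine absurd hd (notin_sb_nonpos fun t => ?_)
        rw [hki]
        simp only [eps_apply, Pi.sub_apply]
        split_ifs <;> norm_num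
      · refine absurd hd (notin_sb_neg (k := i) ?_ (by omega))
        have e1 : i ≠ k := by omega
        have e2 : i ≠ n := by omega
        norm_num [eps_apply, Pi.sub_apply, e1, e2]
  · -- pair minus A_i
    by_cases hln : l = n
    · refine absurd hd (notin_sb_two (k := n) ?_)
      have e1 : n ≠ k := by omega
      have e2 : n ≠ i := by omega
      rw [hln]
      norm_num [eps_apply, Pi.add_apply, Pi.sub_apply, e1, e2]
    · by_cases hmem : i = k ∨ i = l
      · rcases invA hn gi1 (by omega) with hA | ⟨c, d, hc, hcd, hdn2, hior, hA⟩ <;>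
          rcases invE hn dk1 dkl (by omega) with
            ⟨a, b, ha, hab, hbn, hak, hal, hbk, hbl, hE⟩ | hE | ⟨t, ht1, ht2, htor, hE⟩
        · rw [hE, hA]
          exact diff_ea hab (by omega) (by omega) (by omega) (by omega)
        · rw [hE, hA]
          refine notin_sb_two (k := n) ?_
          have e1 : n ≠ i := by omega
          norm_num [eps_apply, Pi.sub_apply, e1]
        · rw [hE, hA]
          exact diff_aa (by omega)
        · rw [hE, hA]
          exact diff_pp hab hcd (by omega) (by omega)
        · rw [hE, hA]
          exact diff_sp hcd (by omega) (by omega)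
        · rw [hE, hA]
          exact diff_ae hcd (by omega) (by omega)
      · refine absurd hd (notin_sb_three (a := k) (b := l) (c := i)
          (by omega) (by omega) (by omega) ?_ ?_ ?_)
        · have e1 : k ≠ l := by omega
          have e2 : k ≠ i := by omega
          have e3 : k ≠ n := by omega
          norm_num [eps_apply, Pi.add_apply, Pi.sub_apply, e1, e2, e3]
        · have e1 : l ≠ k := by omega
          have e2 : l ≠ i := by omega
          have e3 : l ≠ n := by omega
          norm_num [eps_apply, Pi.add_apply, Pi.sub_apply, e1, e2, e3]
        · have e1 : i ≠ k := by omega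
          have e2 : i ≠ l := by omega
          have e3 : i ≠ n := by omega
          norm_num [eps_apply, Pi.add_apply, Pi.sub_apply, e1, e2, e3]
  · -- single minus A_i
    by_cases hkn : k = n
    · refine absurd hd (notin_sb_two (k := n) ?_)
      have e1 : n ≠ i := by omega
      rw [hkn]
      norm_num [eps_apply, Pi.sub_apply, e1]
    · by_cases hki : k = i
      · rw [hki, invD gi1 (by omega)]
        rcases invA hn gi1 (by omega) with hA | ⟨c, d, hc, hcd, hdn2, hior, hA⟩
        · rw [hA]
          refine notin_sb_two (k := n) ?_
          have e1 : n ≠ i := by omega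
          norm_num [eps_apply, Pi.add_apply, Pi.sub_apply, e1]
        · rw [hA]
          rcases hior with rfl|rfl
          · refine notin_sb_neg (k := d) ?_ (by omega)
            have e1 : d ≠ i := by omega
            have e2 : d ≠ n := by omega
            norm_num [eps_apply, Pi.add_apply, Pi.sub_apply, e1, e2]
          · refine notin_sb_neg (k := c) ?_ (by omega)
            have e1 : c ≠ i := by omega
            have e2 : c ≠ n := by omega
            norm_num [eps_apply, Pi.add_apply, Pi.sub_apply, e1, e2]
      · refine absurd hd (notin_sb_three (a := k) (b := i) (c := n)
          (by omega) (by omega) (by omega) ?_ ?_ ?_)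
        · have e1 : k ≠ i := by omega
          have e2 : k ≠ n := by omega
          norm_num [eps_apply, Pi.sub_apply, e1, e2]
        · have e1 : i ≠ k := by omega
          have e2 : i ≠ n := by omega
          norm_num [eps_apply, Pi.sub_apply, e1, e2]
        · have e1 : n ≠ k := by omega
          have e2 : n ≠ i := by omega
          norm_num [eps_apply, Pi.sub_apply, e1, e2]
  · -- A_k minus A_i
    exact absurd hd (diff_aa (by omega))

end Braid

/-- There is an order-two permutation of `S` breaking both sums and
differences of roots (an arrow-breaking involution for the parabolic nilradical of type `B`). -/
theorem statement11 (n : ℕ) (hn : 3 ≤ n) :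
    ∃ σ : (ℕ → ℝ) → (ℕ → ℝ),
      (∀ x ∈ SB n, σ x ∈ SB n) ∧
      (∀ x ∈ SB n, σ (σ x) = x) ∧
      (∃ x ∈ SB n, σ x ≠ x) ∧
      (∀ γ ∈ SB n, ∀ δ ∈ SB n, γ + δ ∈ PiPlusB n → σ γ + σ δ ∉ PiPlusB n) ∧
      (∀ γ ∈ SB n, ∀ δ ∈ SB n, δ - γ ∈ SB n → σ δ - σ γ ∉ SB n) := by
  refine ⟨Braid.sig n, fun x hx => Braid.sig_mem hn hx, fun x hx => Braid.sig_sig hn hx,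
    ⟨eps 1, Braid.mem_single (le_refl 1) (by omega), ?_⟩,
    fun γ hγ δ hδ hs => Braid.sum_cond hn hγ hδ hs,
    fun γ hγ δ hδ hdd => Braid.diff_cond hn hγ hδ hdd⟩
  rw [Braid.invD (le_refl 1) (by omega)]
  intro h
  have hc := congrFun h n
  have e1 : n ≠ 1 := by omega
  simp [Braid.eps_apply, Pi.add_apply, e1] at hc
end ArrowBreakingPaper
end

section
/- For every integer n ≥ 2, the real Heisenberg Lie algebra h_{2n+1}, with basis {e_1,…,e_{2n}, y} and only nonzero brackets [e_{2i}, e_{2i−1}] = y for i = 1,…,n, admits a Ricci-flat metric which is not flat. -/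
open scoped BigOperators

namespace ArrowBreakingPaper

variable {ι : Type*} {g : Type*} [LieRing g] [LieAlgebra ℝ g]

open Matrix

/-- partner function for the metric pairing -/
def pan (n k : ℕ) : ℕ :=
  if k = 0 then 2*n else if k = 2*n then 0 else if k = 2*n - 1 then 2*n - 1
  else if k % 2 = 1 then k+1 else k-1

noncomputable def csign (n k : ℕ) : ℝ := if k % 2 = 1 then 1 else if k = 2*n then 0 else -1

def atgt (n k : ℕ) : ℕ :=
  if k % 2 = 1 then pan n (k-1) else if k = 2*n then 0 else pan n (k+1)

lemma pan_lt {n k : ℕ} (hn : 1 ≤ n) (hk : k < 2*n+1) : pan n k < 2*n+1 := by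
  unfold pan; split_ifs <;> first | contradiction | omega

lemma pan_pan {n k : ℕ} (hn : 2 ≤ n) (hk : k < 2*n+1) : pan n (pan n k) = k := by
  unfold pan; split_ifs <;> first | contradiction | omega

lemma pan_inj {n k l : ℕ} (hn : 2 ≤ n) (hk : k < 2*n+1) (hl : l < 2*n+1)
    (h : pan n k = pan n l) : k = l := by
  have hk' := pan_pan hn hk
  have hl' := pan_pan hn hl
  rw [h] at hk'; omega

lemma atgt_lt {n k : ℕ} (hn : 1 ≤ n) (hk : k < 2*n+1) : atgt n k < 2*n+1 := by
  unfold atgt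
  split_ifs with h1 h2
  · exact pan_lt hn (by omega)
  · omega
  · exact pan_lt hn (by omega)

lemma atgt_eval {n i : ℕ} (hn : 2 ≤ n) (hi : i < 2*n+1) :
    (i % 2 = 1 ∧ ((i = 1 ∧ atgt n i = 2*n) ∨ (2 < i ∧ atgt n i = i-2))) ∨
    (i = 2*n ∧ atgt n i = 0) ∨
    (i % 2 = 0 ∧ i < 2*n ∧
      ((i = 2*n-2 ∧ atgt n i = 2*n-1) ∨ (i + 2 < 2*n ∧ atgt n i = i+2))) := by
  unfold atgt pan; split_ifs <;> first | contradiction | omega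

lemma csign_odd {n i : ℕ} (h : i % 2 = 1) : csign n i = 1 := by
  unfold csign; split_ifs <;> first | rfl | omega

lemma csign_top {n i : ℕ} (h : i = 2*n) (hn : 1 ≤ n) : csign n i = 0 := by
  unfold csign; split_ifs <;> first | rfl | omega

lemma csign_even {n i : ℕ} (h : i % 2 = 0) (h2 : i ≠ 2*n) : csign n i = -1 := by
  unfold csign; split_ifs <;> first | rfl | omega

/-- the bracket coefficient: `⁅e i, e j⁆ = brc n i j • y`. -/
noncomputable def brc (n i j : ℕ) : ℝ :=
  if i % 2 = 1 ∧ i < 2*n ∧ j+1 = i then 1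
  else if j % 2 = 1 ∧ j < 2*n ∧ i+1 = j then -1 else 0

/-- arithmetic core of the identity `B (A eᵢ) eⱼ = ω(eᵢ,eⱼ)`. -/
lemma key_arith {n i j : ℕ} (hn : 2 ≤ n) (hi : i < 2*n+1) (hj : j < 2*n+1) :
    csign n i * (if pan n (atgt n i) = j then 1 else 0) = brc n i j := by
  rcases atgt_eval hn hi with ⟨ho, ⟨h1, ha⟩ | ⟨h1, ha⟩⟩ | ⟨h1, ha⟩ |
    ⟨he, hlt, ⟨h1, ha⟩ | ⟨h1, ha⟩⟩ <;>
    rw [ha] <;>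
    [rw [csign_odd ho]; rw [csign_odd ho]; rw [csign_top h1 (by omega)];
     rw [csign_even he (by omega)]; rw [csign_even he (by omega)]] <;>
  · have hp : ∀ V : ℕ, pan n V = V → True := fun _ _ => trivial
    unfold pan brc
    split_ifs <;> first | contradiction | omega | norm_num

/-- arithmetic core of `tr A² = 0`. -/
lemma tr_arith {n i : ℕ} (hn : 2 ≤ n) (hi : i < 2*n+1) :
    csign n i * (csign n (atgt n i) * (if atgt n (atgt n i) = i then (1:ℝ) else 0)) = 0 := by
  rcases atgt_eval hn hi with ⟨ho, ⟨h1, ha⟩ | ⟨h1, ha⟩⟩ | ⟨h1, ha⟩ |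
    ⟨he, hlt, ⟨h1, ha⟩ | ⟨h1, ha⟩⟩
  · rw [ha, csign_top rfl (by omega)]; ring
  · rw [ha]
    have hne : atgt n (i-2) ≠ i := by unfold atgt pan; split_ifs <;> omega
    rw [if_neg hne]; ring
  · rw [csign_top h1 (by omega)]; ring
  · rw [ha]
    have hne : atgt n (2*n-1) ≠ i := by unfold atgt pan; split_ifs <;> omega
    rw [if_neg hne]; ring
  · rw [ha]
    have hne : atgt n (i+2) ≠ i := by unfold atgt pan; split_ifs <;> omega
    rw [if_neg hne]; ring


section machinery

variable {m : ℕ} (f : Module.Basis (Fin m) ℝ g) (B : LinearMap.BilinForm ℝ g)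

lemma gram_apply (i j : Fin m) : gram f B i j = B (f i) (f j) := rfl

lemma expand_left (x : g) (j : Fin m) :
    B x (f j) = ∑ p, f.repr x p * gram f B p j := by
  conv_lhs => rw [← f.sum_repr x]
  simp only [map_sum, LinearMap.sum_apply, _root_.map_smul, LinearMap.smul_apply, smul_eq_mul,
    gram_apply]

lemma expand_right (x : g) (j : Fin m) :
    B (f j) x = ∑ p, f.repr x p * gram f B j p := by
  conv_lhs => rw [← f.sum_repr x]
  simp only [map_sum, _root_.map_smul, smul_eq_mul, gram_apply]

lemma expand_right' (x u : g) :
    B x u = ∑ p, f.repr u p * B x (f p) := by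
  conv_lhs => rw [← f.sum_repr u]
  simp only [map_sum, _root_.map_smul, smul_eq_mul]

lemma gram_transpose (hsym : IsSymm B) : (gram f B)ᵀ = gram f B :=
  Matrix.ext fun i j => hsym (f j) (f i)

lemma gram_det_ne_zero (hsym : IsSymm B) (hnd : Nondeg B) : (gram f B).det ≠ 0 := by
  intro h0
  have h0' : (gram f B)ᵀ.det = 0 := by rw [Matrix.det_transpose]; exact h0
  obtain ⟨v, hv0, hv⟩ := (Matrix.exists_mulVec_eq_zero_iff).mpr h0'
  set x := ∑ p, v p • f p with hxdef
  have hx : ∀ j, B x (f j) = 0 := by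
    intro j
    have : B x (f j) = ∑ p, v p * gram f B p j := by
      simp only [hxdef, map_sum, LinearMap.sum_apply, _root_.map_smul, LinearMap.smul_apply,
        smul_eq_mul, gram_apply]
    rw [this]
    have := congrFun hv j
    simp only [Matrix.mulVec, dotProduct, Matrix.transpose_apply, Pi.zero_apply] at this
    rw [← this]
    exact Finset.sum_congr rfl fun p _ => mul_comm _ _
  have hxz : x = 0 := by
    refine hnd x fun w => ?_
    rw [expand_right' f B x w]
    simp [hx]
  have : ∀ p, v p = 0 := by
    intro p
    have h2 := congrArg (fun z => f.repr z p) hxz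
    simp only [hxdef, map_zero, Finsupp.coe_zero, Pi.zero_apply] at h2
    rwa [Module.Basis.repr_sum_self] at h2
  exact hv0 (funext this)

lemma gram_mul_inv (hsym : IsSymm B) (hnd : Nondeg B) :
    gram f B * (gram f B)⁻¹ = 1 :=
  Matrix.mul_nonsing_inv _ (isUnit_iff_ne_zero.mpr (gram_det_ne_zero f B hsym hnd))

lemma gram_inv_symm (hsym : IsSymm B) (i j : Fin m) :
    (gram f B)⁻¹ i j = (gram f B)⁻¹ j i := by
  have h : ((gram f B)⁻¹)ᵀ = (gram f B)⁻¹ := by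
    rw [Matrix.transpose_nonsing_inv, gram_transpose f B hsym]
  conv_lhs => rw [← h]
  simp [Matrix.transpose_apply]

lemma contract_one (hsym : IsSymm B) (hnd : Nondeg B) (u : g) (l : Fin m) :
    ∑ j, (gram f B)⁻¹ j l * B u (f j) = f.repr u l := by
  simp only [expand_left f B u]
  calc ∑ j, (gram f B)⁻¹ j l * ∑ p, f.repr u p * gram f B p j
      = ∑ j, ∑ p, f.repr u p * (gram f B p j * (gram f B)⁻¹ j l) := by
        refine Finset.sum_congr rfl fun j _ => ?_
        rw [Finset.mul_sum]
        exact Finset.sum_congr rfl fun p _ => by ring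
    _ = ∑ p, ∑ j, f.repr u p * (gram f B p j * (gram f B)⁻¹ j l) := Finset.sum_comm
    _ = ∑ p, f.repr u p * (gram f B * (gram f B)⁻¹) p l := by
        refine Finset.sum_congr rfl fun p _ => ?_
        rw [Matrix.mul_apply, Finset.mul_sum]
    _ = f.repr u l := by
        rw [gram_mul_inv f B hsym hnd]
        simp [Matrix.one_apply]

lemma pairing_contract (hsym : IsSymm B) (hnd : Nondeg B) (u u' : g) :
    ∑ j, ∑ l, (gram f B)⁻¹ j l * B u (f j) * B u' (f l) = B u u' := by
  calc ∑ j, ∑ l, (gram f B)⁻¹ j l * B u (f j) * B u' (f l)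
      = ∑ l, ∑ j, (gram f B)⁻¹ j l * B u (f j) * B u' (f l) := Finset.sum_comm
    _ = ∑ l, (∑ j, (gram f B)⁻¹ j l * B u (f j)) * B u' (f l) := by
        exact Finset.sum_congr rfl fun l _ => (Finset.sum_mul ..).symm
    _ = ∑ l, f.repr u l * B u' (f l) := by
        exact Finset.sum_congr rfl fun l _ => by rw [contract_one f B hsym hnd]
    _ = B u' u := (expand_right' f B u' u).symm
    _ = B u u' := hsym u' u

lemma trace_contract (hsym : IsSymm B) (hnd : Nondeg B) (T : g →ₗ[ℝ] g) :
    ∑ i, ∑ k, (gram f B)⁻¹ i k * B (T (f i)) (f k) = LinearMap.trace ℝ g T := by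
  have h1 : ∀ i : Fin m, ∑ k, (gram f B)⁻¹ i k * B (T (f i)) (f k) = f.repr (T (f i)) i := by
    intro i
    have : ∀ k : Fin m, (gram f B)⁻¹ i k = (gram f B)⁻¹ k i := fun k =>
      gram_inv_symm f B hsym i k
    calc ∑ k, (gram f B)⁻¹ i k * B (T (f i)) (f k)
        = ∑ k, (gram f B)⁻¹ k i * B (T (f i)) (f k) := by
          exact Finset.sum_congr rfl fun k _ => by rw [this k]
      _ = f.repr (T (f i)) i := contract_one f B hsym hnd (T (f i)) i
  rw [Finset.sum_congr rfl fun i _ => h1 i]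
  rw [LinearMap.trace_eq_matrix_trace ℝ f T, Matrix.trace]
  exact Finset.sum_congr rfl fun i _ => by
    simp [Matrix.diag, LinearMap.toMatrix_apply]

end machinery


section heisenberg

variable (n : ℕ) (e : Module.Basis (Fin (2*n+1)) ℝ g)

/-- The index of the central element `y`. -/
def ctr : Fin (2*n+1) := ⟨2*n, show 2*n < 2*n+1+0 by omega⟩

/-- The partner involution on indices, as a map of `Fin`. -/
def pfF (hn : 2 ≤ n) (i : Fin (2*n+1)) : Fin (2*n+1) :=
  ⟨pan n i, pan_lt (by omega) i.isLt⟩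

/-- The Ricci-flat metric. -/
noncomputable def Bf (hn : 2 ≤ n) : LinearMap.BilinForm ℝ g :=
  ∑ i, (LinearMap.mul ℝ ℝ).compl₁₂ (e.coord i) (e.coord (pfF n hn i))

/-- The central basis vector. -/
noncomputable def Yv : g := e (ctr n)

/-- The `y`-coefficient of the bracket, as a bilinear form. -/
noncomputable def omf : LinearMap.BilinForm ℝ g :=
  LinearMap.mk₂ ℝ (fun x z => e.repr ⁅x, z⁆ (ctr n))
    (fun x y z => by simp [add_lie])
    (fun c x z => by simp [smul_lie])
    (fun x y z => by simp [lie_add])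
    (fun c x z => by simp [lie_smul])

/-- The operator `A = φ⁻¹ ∘ Ω`. -/
noncomputable def Af (hn : 2 ≤ n) : g →ₗ[ℝ] g :=
  e.constr ℝ fun i => csign n i • e ⟨atgt n i, atgt_lt (by omega) i.isLt⟩

variable (hn : 2 ≤ n)

lemma Bf_apply (x z : g) :
    Bf n e hn x z = ∑ i, e.repr x i * e.repr z (pfF n hn i) := by
  simp [Bf, LinearMap.sum_apply, LinearMap.compl₁₂_apply, LinearMap.mul_apply',
    Module.Basis.coord_apply]

lemma omf_apply (x z : g) : omf n e x z = e.repr ⁅x, z⁆ (ctr n) := rfl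

lemma Bf_basis (i j : Fin (2*n+1)) :
    Bf n e hn (e i) (e j) = if pan n (i : ℕ) = (j : ℕ) then 1 else 0 := by
  rw [Bf_apply]
  rw [Finset.sum_eq_single i]
  · simp only [Module.Basis.repr_self, Finsupp.single_eq_same, one_mul, Finsupp.single_apply]
    congr 1
    simp [pfF, Fin.ext_iff, eq_comm]
  · intro k _ hk
    simp [Module.Basis.repr_self, Finsupp.single_apply, Ne.symm hk]
  · intro h; exact absurd (Finset.mem_univ i) h

lemma Bf_symm : IsSymm (Bf n e hn) := by
  have h : Bf n e hn = (Bf n e hn).flip := by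
    refine LinearMap.ext_basis e e fun i j => ?_
    show Bf n e hn (e i) (e j) = Bf n e hn (e j) (e i)
    rw [Bf_basis, Bf_basis]
    have hi := i.isLt
    have hj := j.isLt
    by_cases h1 : pan n (i : ℕ) = (j : ℕ)
    · rw [if_pos h1, if_pos (by rw [← h1]; exact pan_pan hn hi)]
    · rw [if_neg h1, if_neg (fun h2 => h1 (by rw [← h2]; exact (pan_pan hn hj)))]
  intro x z
  conv_lhs => rw [h]
  rfl

lemma Bf_nondeg : Nondeg (Bf n e hn) := by
  intro x hx
  refine Module.Basis.ext_elem e fun i => ?_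
  have h := hx (e (pfF n hn i))
  rw [Bf_apply] at h
  rw [Finset.sum_eq_single i] at h
  · simpa [Module.Basis.repr_self, Finsupp.single_apply, pfF, Fin.ext_iff,
      pan_inj hn] using h
  · intro k _ hk
    have hne : ¬ (pfF n hn i = pfF n hn k) := by
      simp only [pfF, Fin.ext_iff]
      intro hc
      exact hk (Fin.ext (pan_inj hn k.isLt i.isLt hc.symm))
    rw [Module.Basis.repr_self, Finsupp.single_apply, if_neg hne, mul_zero]
  · intro h; exact absurd (Finset.mem_univ i) h

lemma Bf_Y_basis (j : Fin (2*n+1)) :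
    Bf n e hn (Yv n e) (e j) = if (j : ℕ) = 0 then 1 else 0 := by
  rw [show Yv n e = e (ctr n) from rfl, Bf_basis]
  have h0 : pan n ((ctr n : Fin (2*n+1)) : ℕ) = 0 := by
    simp only [ctr]; unfold pan; split_ifs <;> omega
  rw [h0]
  simp [eq_comm]

lemma Bf_YY : Bf n e hn (Yv n e) (Yv n e) = 0 := by
  rw [show Yv n e = e (ctr n) from rfl, Bf_basis]
  rw [if_neg (by simp only [ctr]; unfold pan; split_ifs <;> omega)]

end heisenberg


section brackets

variable (n : ℕ) (e : Module.Basis (Fin (2*n+1)) ℝ g) (hn : 2 ≤ n)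
variable (hbr : ∀ i : Fin n,
      ⁅e ⟨2 * (i : ℕ) + 1, show 2 * (i : ℕ) + 1 < 2 * n + 1 + 0 by have := i.isLt; omega⟩,
        e ⟨2 * (i : ℕ), show 2 * (i : ℕ) < 2 * n + 1 + 0 by have := i.isLt; omega⟩⁆ =
      e ⟨2 * n, show 2 * n < 2 * n + 1 + 0 by omega⟩)
variable (hzero : ∀ i j : Fin (2 * n + 1),
      (¬ ∃ m : Fin n, ((i : ℕ) = 2 * (m : ℕ) + 1 ∧ (j : ℕ) = 2 * (m : ℕ)) ∨
        ((i : ℕ) = 2 * (m : ℕ) ∧ (j : ℕ) = 2 * (m : ℕ) + 1)) →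
      ⁅e i, e j⁆ = 0)

include hbr hzero

lemma brv (i j : Fin (2*n+1)) :
    ⁅e i, e j⁆ = brc n (i : ℕ) (j : ℕ) • Yv n e := by
  by_cases h1 : (i:ℕ) % 2 = 1 ∧ (i:ℕ) < 2*n ∧ (j:ℕ)+1 = (i:ℕ)
  · have hm : (j:ℕ)/2 < n := by omega
    have hi' : i = ⟨2*((j:ℕ)/2)+1, by omega⟩ := by
      apply Fin.ext; show (i:ℕ) = 2*((j:ℕ)/2)+1; omega
    have hj' : j = ⟨2*((j:ℕ)/2), by omega⟩ := by
      apply Fin.ext; show (j:ℕ) = 2*((j:ℕ)/2); omega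
    rw [congrArg e hi', congrArg e hj', hbr ⟨(j:ℕ)/2, hm⟩]
    unfold brc
    rw [if_pos h1, one_smul]
    rfl
  · by_cases h2 : (j:ℕ) % 2 = 1 ∧ (j:ℕ) < 2*n ∧ (i:ℕ)+1 = (j:ℕ)
    · have hm : (i:ℕ)/2 < n := by omega
      have hj' : j = ⟨2*((i:ℕ)/2)+1, by omega⟩ := by
        apply Fin.ext; show (j:ℕ) = 2*((i:ℕ)/2)+1; omega
      have hi' : i = ⟨2*((i:ℕ)/2), by omega⟩ := by
        apply Fin.ext; show (i:ℕ) = 2*((i:ℕ)/2); omega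
      rw [← lie_skew, congrArg e hj', congrArg e hi', hbr ⟨(i:ℕ)/2, hm⟩]
      unfold brc
      rw [if_neg h1, if_pos h2, neg_one_smul]
      rfl
    · unfold brc
      rw [if_neg h1, if_neg h2, zero_smul]
      refine hzero i j ?_
      rintro ⟨m, ⟨hm1, hm2⟩ | ⟨hm1, hm2⟩⟩
      · exact h1 ⟨by omega, by have := m.isLt; omega, by omega⟩
      · exact h2 ⟨by omega, by have := m.isLt; omega, by omega⟩

lemma omf_basis (i j : Fin (2*n+1)) :
    omf n e (e i) (e j) = brc n (i : ℕ) (j : ℕ) := by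
  rw [omf_apply, brv n e hbr hzero]
  simp [Yv, _root_.map_smul, Module.Basis.repr_self]

lemma brkt (x z : g) : ⁅x, z⁆ = omf n e x z • Yv n e := by
  have h : (LinearMap.mk₂ ℝ (fun x z : g => ⁅x, z⁆)
        (fun a b c => add_lie a b c) (fun c a b => smul_lie c a b)
        (fun a b c => lie_add a b c) (fun c a b => lie_smul c a b))
      = (omf n e).compr₂ (LinearMap.toSpanSingleton ℝ g (Yv n e)) := by
    refine LinearMap.ext_basis e e fun i j => ?_
    simp only [LinearMap.mk₂_apply, LinearMap.compr₂_apply,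
      LinearMap.toSpanSingleton_apply]
    rw [brv n e hbr hzero, omf_basis n e hbr hzero]
  have h2 := LinearMap.congr_fun (LinearMap.congr_fun h x) z
  simpa only [LinearMap.mk₂_apply, LinearMap.compr₂_apply,
    LinearMap.toSpanSingleton_apply] using h2

end brackets

section keyidentity

variable (n : ℕ) (e : Module.Basis (Fin (2*n+1)) ℝ g) (hn : 2 ≤ n)

lemma Af_basis (i : Fin (2*n+1)) :
    Af n e hn (e i) = csign n (i : ℕ) • e ⟨atgt n (i : ℕ), atgt_lt (by omega) i.isLt⟩ :=
  Module.Basis.constr_basis e ℝ _ i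

lemma omf_skew (x z : g) : omf n e x z = - omf n e z x := by
  rw [omf_apply, omf_apply, ← lie_skew z x, map_neg]
  simp

lemma key_identity
    (hbr : ∀ i : Fin n,
      ⁅e ⟨2 * (i : ℕ) + 1, show 2 * (i : ℕ) + 1 < 2 * n + 1 + 0 by have := i.isLt; omega⟩,
        e ⟨2 * (i : ℕ), show 2 * (i : ℕ) < 2 * n + 1 + 0 by have := i.isLt; omega⟩⁆ =
      e ⟨2 * n, show 2 * n < 2 * n + 1 + 0 by omega⟩)
    (hzero : ∀ i j : Fin (2 * n + 1),
      (¬ ∃ m : Fin n, ((i : ℕ) = 2 * (m : ℕ) + 1 ∧ (j : ℕ) = 2 * (m : ℕ)) ∨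
        ((i : ℕ) = 2 * (m : ℕ) ∧ (j : ℕ) = 2 * (m : ℕ) + 1)) →
      ⁅e i, e j⁆ = 0)
    (x z : g) : Bf n e hn (Af n e hn x) z = omf n e x z := by
  have h : (Bf n e hn) ∘ₗ (Af n e hn) = omf n e := by
    refine LinearMap.ext_basis e e fun i j => ?_
    rw [LinearMap.comp_apply, Af_basis, _root_.map_smul, LinearMap.smul_apply,
      Bf_basis, omf_basis n e hbr hzero, smul_eq_mul]
    exact key_arith hn i.isLt j.isLt
  exact LinearMap.congr_fun (LinearMap.congr_fun h x) z

lemma trace_A2 : LinearMap.trace ℝ g ((Af n e hn) ∘ₗ (Af n e hn)) = 0 := by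
  rw [LinearMap.trace_eq_matrix_trace ℝ e, Matrix.trace]
  refine Finset.sum_eq_zero fun i _ => ?_
  have h2 : Af n e hn (e ⟨atgt n (i : ℕ), atgt_lt (by omega) i.isLt⟩)
      = csign n (atgt n (i : ℕ)) •
        e ⟨atgt n (atgt n (i : ℕ)), atgt_lt (by omega) (atgt_lt (by omega) i.isLt)⟩ :=
    Module.Basis.constr_basis e ℝ _ _
  simp only [Matrix.diag_apply, LinearMap.toMatrix_apply, LinearMap.comp_apply,
    Af_basis, _root_.map_smul, h2, Finsupp.smul_apply, Module.Basis.repr_self,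
    smul_eq_mul, Finsupp.single_apply, Fin.ext_iff]
  exact tr_arith hn i.isLt

end keyidentity


section ricciflat

variable (n : ℕ) (e : Module.Basis (Fin (2*n+1)) ℝ g) (hn : 2 ≤ n)

lemma ricci_flat_aux
    (hbr : ∀ i : Fin n,
      ⁅e ⟨2 * (i : ℕ) + 1, show 2 * (i : ℕ) + 1 < 2 * n + 1 + 0 by have := i.isLt; omega⟩,
        e ⟨2 * (i : ℕ), show 2 * (i : ℕ) < 2 * n + 1 + 0 by have := i.isLt; omega⟩⁆ =
      e ⟨2 * n, show 2 * n < 2 * n + 1 + 0 by omega⟩)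
    (hzero : ∀ i j : Fin (2 * n + 1),
      (¬ ∃ m : Fin n, ((i : ℕ) = 2 * (m : ℕ) + 1 ∧ (j : ℕ) = 2 * (m : ℕ)) ∨
        ((i : ℕ) = 2 * (m : ℕ) ∧ (j : ℕ) = 2 * (m : ℕ) + 1)) →
      ⁅e i, e j⁆ = 0)
    (m : ℕ) (f : Module.Basis (Fin m) ℝ g) (v w : g) :
    ricci f (Bf n e hn) v w = 0 := by
  have hsym := Bf_symm n e hn
  have hnd := Bf_nondeg n e hn
  have hY := Bf_YY n e hn
  have hbk : ∀ x z : g, ⁅x, z⁆ = omf n e x z • Yv n e := brkt n e hbr hzero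
  have hKI : ∀ x z : g, Bf n e hn (Af n e hn x) z = omf n e x z :=
    key_identity n e hn hbr hzero
  set B := Bf n e hn with hB
  set A := Af n e hn with hA
  have hAA : ∀ x z : g, B (A x) (A z) = B ((-(A ∘ₗ A)) x) z := by
    intro x z
    calc B (A x) (A z) = B (A z) (A x) := hsym _ _
      _ = omf n e z (A x) := hKI z (A x)
      _ = - omf n e (A x) z := omf_skew n e z (A x)
      _ = - (B (A (A x)) z) := by rw [hKI (A x) z]
      _ = B (-(A (A x))) z := by rw [map_neg, LinearMap.neg_apply]
      _ = B ((-(A ∘ₗ A)) x) z := rfl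
  rw [ricci]
  have hterm2 : ∑ i, ∑ j, (gram f B)⁻¹ i j * B ⁅v, f i⁆ ⁅w, f j⁆ = 0 := by
    refine Finset.sum_eq_zero fun i _ => Finset.sum_eq_zero fun j _ => ?_
    rw [hbk v (f i), hbk w (f j)]
    simp [_root_.map_smul, smul_eq_mul, hY]
  rw [hterm2, mul_zero, sub_zero]
  suffices H : (∑ i, ∑ j, ∑ k, ∑ l,
      (gram f B)⁻¹ i k * (gram f B)⁻¹ j l * (-(B v ⁅f i, f j⁆)) * (-(B w ⁅f k, f l⁆))) = 0 by
    rw [H]; ring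
  have hsummand : ∀ i j k l : Fin m,
      (gram f B)⁻¹ i k * (gram f B)⁻¹ j l * (-(B v ⁅f i, f j⁆)) * (-(B w ⁅f k, f l⁆))
      = (B v (Yv n e) * B w (Yv n e) * (gram f B)⁻¹ i k) *
        ((gram f B)⁻¹ j l * B (A (f i)) (f j) * B (A (f k)) (f l)) := by
    intro i j k l
    rw [hbk (f i) (f j), hbk (f k) (f l), _root_.map_smul, _root_.map_smul,
      hKI (f i) (f j), hKI (f k) (f l)]
    simp only [smul_eq_mul]
    ring
  have hik : ∀ i k : Fin m,
      (∑ j, ∑ l, (gram f B)⁻¹ i k * (gram f B)⁻¹ j l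
          * (-(B v ⁅f i, f j⁆)) * (-(B w ⁅f k, f l⁆)))
      = (B v (Yv n e) * B w (Yv n e)) *
          ((gram f B)⁻¹ i k * B ((-(A ∘ₗ A)) (f i)) (f k)) := by
    intro i k
    calc (∑ j, ∑ l, (gram f B)⁻¹ i k * (gram f B)⁻¹ j l
          * (-(B v ⁅f i, f j⁆)) * (-(B w ⁅f k, f l⁆)))
        = ∑ j, ∑ l, (B v (Yv n e) * B w (Yv n e) * (gram f B)⁻¹ i k) *
            ((gram f B)⁻¹ j l * B (A (f i)) (f j) * B (A (f k)) (f l)) := by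
          exact Finset.sum_congr rfl fun j _ => Finset.sum_congr rfl fun l _ =>
            hsummand i j k l
      _ = (B v (Yv n e) * B w (Yv n e) * (gram f B)⁻¹ i k) *
            ∑ j, ∑ l, (gram f B)⁻¹ j l * B (A (f i)) (f j) * B (A (f k)) (f l) := by
          simp only [← Finset.mul_sum]
      _ = (B v (Yv n e) * B w (Yv n e) * (gram f B)⁻¹ i k) * B (A (f i)) (A (f k)) := by
          rw [pairing_contract f B hsym hnd]
      _ = (B v (Yv n e) * B w (Yv n e)) *
            ((gram f B)⁻¹ i k * B ((-(A ∘ₗ A)) (f i)) (f k)) := by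
          rw [hAA]; ring
  calc (∑ i, ∑ j, ∑ k, ∑ l,
      (gram f B)⁻¹ i k * (gram f B)⁻¹ j l * (-(B v ⁅f i, f j⁆)) * (-(B w ⁅f k, f l⁆)))
      = ∑ i, ∑ k, ∑ j, ∑ l,
        (gram f B)⁻¹ i k * (gram f B)⁻¹ j l * (-(B v ⁅f i, f j⁆)) * (-(B w ⁅f k, f l⁆)) :=
        Finset.sum_congr rfl fun i _ => Finset.sum_comm
    _ = ∑ i, ∑ k, (B v (Yv n e) * B w (Yv n e)) *
          ((gram f B)⁻¹ i k * B ((-(A ∘ₗ A)) (f i)) (f k)) :=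
        Finset.sum_congr rfl fun i _ => Finset.sum_congr rfl fun k _ => hik i k
    _ = (B v (Yv n e) * B w (Yv n e)) *
          ∑ i, ∑ k, (gram f B)⁻¹ i k * B ((-(A ∘ₗ A)) (f i)) (f k) := by
        simp only [← Finset.mul_sum]
    _ = 0 := by
        rw [trace_contract f B hsym hnd, map_neg, trace_A2 n e hn, neg_zero, mul_zero]

end ricciflat


section nonflat

variable (n : ℕ) (e : Module.Basis (Fin (2*n+1)) ℝ g) (hn : 2 ≤ n)

lemma not_flat_aux
    (hbr : ∀ i : Fin n,
      ⁅e ⟨2 * (i : ℕ) + 1, show 2 * (i : ℕ) + 1 < 2 * n + 1 + 0 by have := i.isLt; omega⟩,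
        e ⟨2 * (i : ℕ), show 2 * (i : ℕ) < 2 * n + 1 + 0 by have := i.isLt; omega⟩⁆ =
      e ⟨2 * n, show 2 * n < 2 * n + 1 + 0 by omega⟩)
    (hzero : ∀ i j : Fin (2 * n + 1),
      (¬ ∃ m : Fin n, ((i : ℕ) = 2 * (m : ℕ) + 1 ∧ (j : ℕ) = 2 * (m : ℕ)) ∨
        ((i : ℕ) = 2 * (m : ℕ) ∧ (j : ℕ) = 2 * (m : ℕ) + 1)) →
      ⁅e i, e j⁆ = 0) :
    ¬ IsFlat (Bf n e hn) := by
  rintro ⟨nab, hLC, hflat⟩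
  have hsym := Bf_symm n e hn
  have hnd := Bf_nondeg n e hn
  have hbk : ∀ x z : g, ⁅x, z⁆ = omf n e x z • Yv n e := brkt n e hbr hzero
  set B := Bf n e hn with hB
  have huniq : ∀ a b x : g,
      (∀ w', 2 * B x w' = B ⁅a, b⁆ w' - B ⁅b, w'⁆ a + B ⁅w', a⁆ b) → nab a b = x := by
    intro a b x hx
    have hzz : ∀ w', B (nab a b - x) w' = 0 := by
      intro w'
      have h1 := hLC a b w'
      have h2 := hx w'
      have h3 : B (nab a b - x) w' = B (nab a b) w' - B x w' := by
        rw [map_sub, LinearMap.sub_apply]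
      rw [h3]; linarith
    exact sub_eq_zero.mp (hnd _ hzz)
  have hYu : B (Yv n e) (e ⟨2*n-2, by omega⟩) = 0 := by
    rw [hB, Bf_Y_basis]
    exact if_neg (by show ¬ (2*n-2 = 0); omega)
  have hYz : B (Yv n e) (e ⟨2*n-1, by omega⟩) = 0 := by
    rw [hB, Bf_Y_basis]
    exact if_neg (by show ¬ (2*n-1 = 0); omega)
  have hYe0 : B (Yv n e) (e ⟨0, by omega⟩) = 1 := by
    rw [hB, Bf_Y_basis]
    exact if_pos rfl
  have hbz : ⁅e ⟨0, by omega⟩, e ⟨2*n-2, by omega⟩⁆ = (0 : g) := by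
    rw [brv n e hbr hzero]
    have hb0 : brc n ((⟨0, by omega⟩ : Fin (2*n+1)) : ℕ)
        ((⟨2*n-2, by omega⟩ : Fin (2*n+1)) : ℕ) = 0 := by
      show brc n 0 (2*n-2) = 0
      unfold brc
      rw [if_neg (by rintro ⟨h1, h2, h3⟩; omega), if_neg (by rintro ⟨h1, h2, h3⟩; omega)]
    rw [hb0, zero_smul]
  have huz : ⁅e ⟨2*n-2, by omega⟩, e ⟨2*n-1, by omega⟩⁆ = -(Yv n e) := by
    rw [brv n e hbr hzero]
    have hb1 : brc n ((⟨2*n-2, by omega⟩ : Fin (2*n+1)) : ℕ)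
        ((⟨2*n-1, by omega⟩ : Fin (2*n+1)) : ℕ) = -1 := by
      show brc n (2*n-2) (2*n-1) = -1
      unfold brc
      rw [if_neg (by rintro ⟨h1, h2, h3⟩; omega),
        if_pos ⟨by omega, by omega, by omega⟩]
    rw [hb1, neg_one_smul]
  have hzfun : ∀ w', B (e ⟨2*n-1, by omega⟩) w' = - omf n e (e ⟨2*n-2, by omega⟩) w' := by
    have hfun : (B (e ⟨2*n-1, by omega⟩) : g →ₗ[ℝ] ℝ)
        = -(omf n e (e ⟨2*n-2, by omega⟩)) := by
      refine Module.Basis.ext e fun j => ?_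
      rw [LinearMap.neg_apply, hB, Bf_basis, omf_basis n e hbr hzero]
      show (if pan n (2*n-1) = (j : ℕ) then (1:ℝ) else 0) = -(brc n (2*n-2) (j : ℕ))
      have hp : pan n (2*n-1) = 2*n-1 := by unfold pan; split_ifs <;> omega
      rw [hp]
      unfold brc
      split_ifs <;> first | contradiction | omega | norm_num
    intro w'
    rw [hfun, LinearMap.neg_apply]
  have h1 : nab (e ⟨2*n-2, by omega⟩) (e ⟨2*n-2, by omega⟩) = 0 := by
    refine huniq _ _ _ fun w' => ?_
    rw [lie_self, hbk (e ⟨2*n-2, by omega⟩) w', hbk w' (e ⟨2*n-2, by omega⟩)]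
    simp only [map_zero, LinearMap.zero_apply, _root_.map_smul, LinearMap.smul_apply,
      smul_eq_mul, hYu, mul_zero]
    ring
  have h2 : nab (e ⟨0, by omega⟩) (e ⟨2*n-2, by omega⟩) = (1/2 : ℝ) • e ⟨2*n-1, by omega⟩ := by
    refine huniq _ _ _ fun w' => ?_
    rw [_root_.map_smul, LinearMap.smul_apply, smul_eq_mul]
    rw [hbz, hbk (e ⟨2*n-2, by omega⟩) w', hbk w' (e ⟨0, by omega⟩)]
    simp only [map_zero, LinearMap.zero_apply, _root_.map_smul, LinearMap.smul_apply,
      smul_eq_mul, hYe0, hYu, mul_one, mul_zero]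
    rw [hzfun w']
    ring
  have h3 : nab (e ⟨2*n-2, by omega⟩) ((1/2 : ℝ) • e ⟨2*n-1, by omega⟩)
      = (-(1/4) : ℝ) • Yv n e := by
    refine huniq _ _ _ fun w' => ?_
    rw [lie_smul, smul_lie, huz, hbk (e ⟨2*n-1, by omega⟩) w', hbk w' (e ⟨2*n-2, by omega⟩)]
    simp only [_root_.map_smul, LinearMap.smul_apply, smul_eq_mul, map_neg,
      LinearMap.neg_apply, hYu, hYz, mul_zero]
    ring
  have h4 : nab (0 : g) (e ⟨2*n-2, by omega⟩) = 0 := by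
    refine huniq _ _ _ fun w' => ?_
    simp [zero_lie, lie_zero]
  have h5 : nab (e ⟨0, by omega⟩) (0 : g) = 0 := by
    refine huniq _ _ _ fun w' => ?_
    simp [zero_lie, lie_zero]
  have hc := hflat (e ⟨0, by omega⟩) (e ⟨2*n-2, by omega⟩) (e ⟨2*n-2, by omega⟩)
  rw [curv, hbz, h1, h2, h4, h5, h3] at hc
  have hY0 : Yv n e = 0 := by
    have : (-(1/4) : ℝ) • Yv n e = 0 := by rw [← hc]; abel
    rcases smul_eq_zero.mp this with h | h
    · norm_num at h
    · exact h
  exact Module.Basis.ne_zero e (ctr n) hY0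

end nonflat


/-- For `n ≥ 2`, the Heisenberg Lie algebra `h_{2n+1}` admits a Ricci-flat
metric which is not flat. -/
theorem statement18 (n : ℕ) (hn : 2 ≤ n) {g : Type*} [LieRing g] [LieAlgebra ℝ g]
    (e : Module.Basis (Fin (2 * n + 1)) ℝ g)
    (hbr : ∀ i : Fin n,
      ⁅e ⟨2 * (i : ℕ) + 1, by have := i.isLt; omega⟩,
        e ⟨2 * (i : ℕ), by have := i.isLt; omega⟩⁆ =
      e ⟨2 * n, by omega⟩)
    (hzero : ∀ i j : Fin (2 * n + 1),
      (¬ ∃ m : Fin n, ((i : ℕ) = 2 * (m : ℕ) + 1 ∧ (j : ℕ) = 2 * (m : ℕ)) ∨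
        ((i : ℕ) = 2 * (m : ℕ) ∧ (j : ℕ) = 2 * (m : ℕ) + 1)) →
      ⁅e i, e j⁆ = 0) :
    ∃ B : LinearMap.BilinForm ℝ g, IsSymm B ∧ Nondeg B ∧ IsRicciFlat B ∧ ¬ IsFlat B := by
  refine ⟨Bf n e hn, Bf_symm n e hn, Bf_nondeg n e hn, ?_, ?_⟩
  · intro m f v w
    exact ricci_flat_aux n e hn hbr hzero m f v w
  · exact not_flat_aux n e hn hbr hzero

end ArrowBreakingPaper
end

section
/- For every integer n ≥ 5, the standard filiform Lie algebra g_n of dimension n, with basis {e_1,…,e_n} and only nonzero brackets [e_1,e_i] = e_{i+1} for i = 2,…,n−1, admits a Ricci-flat metric which is not flat. -/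
open scoped BigOperators

namespace ArrowBreakingPaper

variable {ι : Type*} {g : Type*} [LieRing g] [LieAlgebra ℝ g]

section AUX

lemma hb0 {n : ℕ} (hn : 5 ≤ n) : 0 < n := by omega

lemma hbi {n i : ℕ} (h : i ≤ n - 2) (hn : 5 ≤ n) : i < n := by omega

lemma hbi1 {n i : ℕ} (h : i ≤ n - 2) (hn : 5 ≤ n) : i + 1 < n := by omega

open scoped Matrix

/-- anti-diagonal bilinear form -/
noncomputable def myB {n : ℕ} (e : Module.Basis (Fin n) ℝ g) : LinearMap.BilinForm ℝ g :=
  LinearMap.mk₂ ℝ (fun x y => ∑ i, e.repr x i * e.repr y i.rev)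
    (fun x x' y => by simp [Finsupp.add_apply, add_mul, Finset.sum_add_distrib])
    (fun c x y => by simp [Finsupp.smul_apply, smul_eq_mul, Finset.mul_sum, mul_assoc])
    (fun x y y' => by simp [Finsupp.add_apply, mul_add, Finset.sum_add_distrib])
    (fun c x y => by
      simp [Finsupp.smul_apply, smul_eq_mul, Finset.mul_sum, mul_left_comm])

lemma myB_apply {n : ℕ} (e : Module.Basis (Fin n) ℝ g) (x y : g) :
    myB e x y = ∑ i, e.repr x i * e.repr y i.rev := rfl

lemma myB_basis {n : ℕ} (e : Module.Basis (Fin n) ℝ g) (i j : Fin n) :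
    myB e (e i) (e j) = if j = i.rev then 1 else 0 := by
  classical
  rw [myB_apply]
  simp [Module.Basis.repr_self, Finsupp.single_apply]
  rw [Finset.sum_eq_single i]
  · simp
  · intro b _ hb; simp [Ne.symm hb]
  · simp

lemma myB_right_basis {n : ℕ} (e : Module.Basis (Fin n) ℝ g) (x : g) (c : Fin n) :
    myB e x (e c) = e.repr x c.rev := by
  classical
  rw [myB_apply]
  rw [Finset.sum_eq_single c.rev]
  · simp [Module.Basis.repr_self, Finsupp.single_apply, Fin.rev_rev]
  · intro b _ hb
    have : ¬ (c = b.rev) := by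
      intro h; apply hb; rw [h, Fin.rev_rev]
    simp [Module.Basis.repr_self, Finsupp.single_apply, this]
  · simp

lemma myB_symm {n : ℕ} (e : Module.Basis (Fin n) ℝ g) (x y : g) :
    myB e x y = myB e y x := by
  rw [myB_apply, myB_apply]
  exact Fintype.sum_equiv (Fin.revPerm) _ _ (fun i => by simp [Fin.rev_rev, mul_comm])

lemma myB_ext {n : ℕ} (e : Module.Basis (Fin n) ℝ g) (x y : g)
    (h : ∀ c, myB e x (e c) = myB e y (e c)) : x = y := by
  have : ∀ k, e.repr x k = e.repr y k := by
    intro k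
    have := h k.rev
    rwa [myB_right_basis, myB_right_basis, Fin.rev_rev] at this
  exact e.repr.injective (Finsupp.ext this)

/-- the anti-diagonal matrix -/
def J (n : ℕ) : Matrix (Fin n) (Fin n) ℝ := Matrix.of fun i j => if j = i.rev then 1 else 0

lemma gram_myB {n : ℕ} (e : Module.Basis (Fin n) ℝ g) : gram e (myB e) = J n := by
  ext i j; exact myB_basis e i j

lemma J_mul_J (n : ℕ) : J n * J n = 1 := by
  ext i j
  rw [Matrix.mul_apply]
  rw [Finset.sum_eq_single i.rev]
  · simp [J, Matrix.one_apply, Fin.rev_rev, eq_comm]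
  · intro b _ hb
    simp only [J, Matrix.of_apply]
    rw [if_neg hb, zero_mul]
  · simp


/-- the key structural fact: gram f B = Pᵀ (gram e B) P with P = e.toMatrix f -/
lemma gram_change {m n : ℕ} (e : Module.Basis (Fin n) ℝ g) (f : Module.Basis (Fin m) ℝ g)
    (B : LinearMap.BilinForm ℝ g) :
    gram f B = (e.toMatrix f)ᵀ * gram e B * (e.toMatrix f) := by
  ext a b
  rw [Matrix.mul_apply]
  simp only [Matrix.mul_apply, Matrix.transpose_apply]
  have hfa : (f a : g) = ∑ i, e.toMatrix f i a • e i := by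
    rw [Module.Basis.sum_toMatrix_smul_self]
  have hfb : (f b : g) = ∑ j, e.toMatrix f j b • e j := by
    rw [Module.Basis.sum_toMatrix_smul_self]
  show B (f a) (f b) = _
  have expand : B (f a) (f b)
      = ∑ i, ∑ j, e.toMatrix f i a * (e.toMatrix f j b * B (e i) (e j)) := by
    rw [hfa, hfb]
    simp only [map_sum, map_smul, LinearMap.sum_apply, LinearMap.smul_apply, smul_eq_mul,
      Finset.mul_sum]
    rw [Finset.sum_comm]
    exact Finset.sum_congr rfl fun i _ => Finset.sum_congr rfl fun j _ => by ring
  rw [expand]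
  rw [Finset.sum_comm]
  apply Finset.sum_congr rfl
  intro j _
  rw [Finset.sum_mul]
  apply Finset.sum_congr rfl
  intro i _
  show e.toMatrix f i a * (e.toMatrix f j b * B (e i) (e j)) = _
  ring_nf
  rfl

lemma gram_inv {m n : ℕ} (e : Module.Basis (Fin n) ℝ g) (f : Module.Basis (Fin m) ℝ g)
    (B : LinearMap.BilinForm ℝ g) (N : Matrix (Fin n) (Fin n) ℝ)
    (h1 : gram e B * N = 1) (h2 : N * gram e B = 1) :
    (gram f B)⁻¹ = (f.toMatrix e) * N * (f.toMatrix e)ᵀ := by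
  apply Matrix.inv_eq_right_inv
  rw [gram_change e f B]
  have hPQ : e.toMatrix f * f.toMatrix e = 1 := Module.Basis.toMatrix_mul_toMatrix_flip e f
  have hQP : f.toMatrix e * e.toMatrix f = 1 := Module.Basis.toMatrix_mul_toMatrix_flip f e
  calc (e.toMatrix f)ᵀ * gram e B * e.toMatrix f * (f.toMatrix e * N * (f.toMatrix e)ᵀ)
      = (e.toMatrix f)ᵀ * gram e B * (e.toMatrix f * f.toMatrix e) * N * (f.toMatrix e)ᵀ := by
        simp only [Matrix.mul_assoc]
    _ = (e.toMatrix f)ᵀ * (gram e B * N) * (f.toMatrix e)ᵀ := by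
        rw [hPQ]; simp only [Matrix.mul_one, Matrix.mul_assoc]
    _ = (f.toMatrix e * e.toMatrix f)ᵀ := by rw [h1, Matrix.mul_one, ← Matrix.transpose_mul]
    _ = 1 := by rw [hQP, Matrix.transpose_one]


/-- helper: sum against toMatrix column recovers basis vector through a linear functional -/
lemma sum_Q_apply {m n : ℕ} (e : Module.Basis (Fin n) ℝ g) (f : Module.Basis (Fin m) ℝ g)
    (T : g →ₗ[ℝ] ℝ) (p : Fin n) :
    ∑ a, f.toMatrix e a p * T (f a) = T (e p) := by
  have h : (e p : g) = ∑ a, f.toMatrix e a p • f a := (Module.Basis.sum_toMatrix_smul_self f e p).symm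
  rw [h, map_sum]
  simp [smul_eq_mul]

lemma key2 {m n : ℕ} (e : Module.Basis (Fin n) ℝ g) (f : Module.Basis (Fin m) ℝ g)
    (B : LinearMap.BilinForm ℝ g) (N : Matrix (Fin n) (Fin n) ℝ)
    (h1 : gram e B * N = 1) (h2 : N * gram e B = 1)
    (C : g →ₗ[ℝ] g →ₗ[ℝ] ℝ) :
    ∑ a, ∑ b, (gram f B)⁻¹ a b * C (f a) (f b) = ∑ p, ∑ q, N p q * C (e p) (e q) := by
  rw [gram_inv e f B N h1 h2]
  set Q := f.toMatrix e with hQ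
  have entry : ∀ a b, (Q * N * Qᵀ) a b = ∑ p, ∑ q, N p q * (Q a p * (Q b q * 1)) := by
    intro a b
    rw [Matrix.mul_apply]
    simp only [Matrix.mul_apply, Matrix.transpose_apply, Finset.sum_mul]
    rw [Finset.sum_comm]
    exact Finset.sum_congr rfl fun p _ => Finset.sum_congr rfl fun q _ => by ring
  calc ∑ a, ∑ b, (Q * N * Qᵀ) a b * C (f a) (f b)
      = ∑ a, ∑ b, ∑ p, ∑ q, N p q * (Q a p * (Q b q * C (f a) (f b))) := by
        apply Finset.sum_congr rfl; intro a _
        apply Finset.sum_congr rfl; intro b _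
        rw [entry a b, Finset.sum_mul]
        apply Finset.sum_congr rfl; intro p _
        rw [Finset.sum_mul]
        exact Finset.sum_congr rfl fun q _ => by ring
    _ = ∑ a, ∑ p, ∑ b, ∑ q, N p q * (Q a p * (Q b q * C (f a) (f b))) := by
        exact Finset.sum_congr rfl fun a _ => Finset.sum_comm
    _ = ∑ p, ∑ a, ∑ b, ∑ q, N p q * (Q a p * (Q b q * C (f a) (f b))) := Finset.sum_comm
    _ = ∑ p, ∑ a, ∑ q, ∑ b, N p q * (Q a p * (Q b q * C (f a) (f b))) := by
        exact Finset.sum_congr rfl fun p _ => Finset.sum_congr rfl fun a _ => Finset.sum_comm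
    _ = ∑ p, ∑ q, ∑ a, ∑ b, N p q * (Q a p * (Q b q * C (f a) (f b))) := by
        exact Finset.sum_congr rfl fun p _ => Finset.sum_comm
    _ = ∑ p, ∑ q, N p q * C (e p) (e q) := by
        apply Finset.sum_congr rfl; intro p _
        apply Finset.sum_congr rfl; intro q _
        have inner : ∀ a, ∑ b, Q b q * C (f a) (f b) = C (f a) (e q) :=
          fun a => sum_Q_apply e f (C (f a)) q
        calc ∑ a, ∑ b, N p q * (Q a p * (Q b q * C (f a) (f b)))
            = N p q * ∑ a, Q a p * ∑ b, Q b q * C (f a) (f b) := by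
              simp only [Finset.mul_sum]
          _ = N p q * ∑ a, Q a p * C (f a) (e q) := by
              congr 1; exact Finset.sum_congr rfl fun a _ => by rw [inner a]
          _ = N p q * C (e p) (e q) := by
              congr 1
              exact sum_Q_apply e f (C.flip (e q)) p


noncomputable def prodForm (α β : Module.Dual ℝ g) : g →ₗ[ℝ] g →ₗ[ℝ] ℝ :=
  LinearMap.mk₂ ℝ (fun x y => α x * β y)
    (fun x x' y => by simp [add_mul])
    (fun c x y => by simp [smul_eq_mul, mul_assoc])
    (fun x y y' => by simp [mul_add])
    (fun c x y => by simp [smul_eq_mul, mul_left_comm])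

@[simp] lemma prodForm_apply (α β : Module.Dual ℝ g) (x y : g) :
    prodForm α β x y = α x * β y := rfl

lemma sum4_congr {α β γ δ : Type*} [Fintype α] [Fintype β] [Fintype γ] [Fintype δ]
    (F G : α → β → γ → δ → ℝ) (h : ∀ i j k l, F i j k l = G i j k l) :
    ∑ i, ∑ j, ∑ k, ∑ l, F i j k l = ∑ i, ∑ j, ∑ k, ∑ l, G i j k l :=
  Finset.sum_congr rfl fun i _ => Finset.sum_congr rfl fun j _ =>
    Finset.sum_congr rfl fun k _ => Finset.sum_congr rfl fun l _ => h i j k l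

lemma sum4_swap24 {α β γ δ : Type*} [Fintype α] [Fintype β] [Fintype γ] [Fintype δ]
    (F : α → β → γ → δ → ℝ) :
    ∑ i, ∑ j, ∑ k, ∑ l, F i j k l = ∑ i, ∑ k, ∑ j, ∑ l, F i j k l :=
  Finset.sum_congr rfl fun i _ => Finset.sum_comm

lemma sum4_swapPairs {α β γ δ : Type*} [Fintype α] [Fintype β] [Fintype γ] [Fintype δ]
    (F : α → β → γ → δ → ℝ) :
    ∑ i, ∑ j, ∑ k, ∑ l, F i j k l = ∑ k, ∑ l, ∑ i, ∑ j, F i j k l := by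
  calc ∑ i, ∑ j, ∑ k, ∑ l, F i j k l
      = ∑ i, ∑ k, ∑ j, ∑ l, F i j k l := sum4_swap24 F
    _ = ∑ k, ∑ i, ∑ j, ∑ l, F i j k l := Finset.sum_comm
    _ = ∑ k, ∑ i, ∑ l, ∑ j, F i j k l :=
        Finset.sum_congr rfl fun k _ => Finset.sum_congr rfl fun i _ => Finset.sum_comm
    _ = ∑ k, ∑ l, ∑ i, ∑ j, F i j k l :=
        Finset.sum_congr rfl fun k _ => Finset.sum_comm

lemma key4 {m n : ℕ} (e : Module.Basis (Fin n) ℝ g) (f : Module.Basis (Fin m) ℝ g)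
    (B : LinearMap.BilinForm ℝ g) (N : Matrix (Fin n) (Fin n) ℝ)
    (h1 : gram e B * N = 1) (h2 : N * gram e B = 1)
    (C D : g →ₗ[ℝ] g →ₗ[ℝ] ℝ) :
    ∑ i, ∑ j, ∑ k, ∑ l,
        (gram f B)⁻¹ i k * (gram f B)⁻¹ j l * C (f i) (f j) * D (f k) (f l)
      = ∑ i, ∑ j, ∑ k, ∑ l, N i k * N j l * C (e i) (e j) * D (e k) (e l) := by
  set M := (gram f B)⁻¹ with hM
  calc ∑ i, ∑ j, ∑ k, ∑ l, M i k * M j l * C (f i) (f j) * D (f k) (f l)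
      = ∑ i, ∑ k, ∑ j, ∑ l, M i k * (M j l * (prodForm (C (f i)) (D (f k)) (f j) (f l))) := by
        rw [sum4_swap24]
        exact sum4_congr _ _ fun i k j l => by simp; ring
    _ = ∑ i, ∑ k, M i k * (∑ j, ∑ l, M j l * (prodForm (C (f i)) (D (f k)) (f j) (f l))) := by
        simp only [Finset.mul_sum]
    _ = ∑ i, ∑ k, M i k * (∑ p, ∑ q, N p q * (prodForm (C (f i)) (D (f k)) (e p) (e q))) := by
        apply Finset.sum_congr rfl; intro i _
        apply Finset.sum_congr rfl; intro k _
        rw [key2 e f B N h1 h2]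
    _ = ∑ i, ∑ k, ∑ p, ∑ q, M i k * (N p q * (C (f i) (e p) * D (f k) (e q))) := by
        simp only [Finset.mul_sum, prodForm_apply]
    _ = ∑ p, ∑ q, ∑ i, ∑ k, M i k * (N p q * (C (f i) (e p) * D (f k) (e q))) :=
        sum4_swapPairs _
    _ = ∑ p, ∑ q, N p q * ∑ i, ∑ k, M i k *
          (prodForm (C.flip (e p)) (D.flip (e q)) (f i) (f k)) := by
        simp only [Finset.mul_sum, prodForm_apply, LinearMap.flip_apply]
        exact sum4_congr _ _ fun p q i k => by ring
    _ = ∑ p, ∑ q, N p q * ∑ r, ∑ s, N r s *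
          (prodForm (C.flip (e p)) (D.flip (e q)) (e r) (e s)) := by
        apply Finset.sum_congr rfl; intro p _
        apply Finset.sum_congr rfl; intro q _
        rw [key2 e f B N h1 h2]
    _ = ∑ p, ∑ q, ∑ r, ∑ s, N p q * (N r s * (C (e r) (e p) * D (e s) (e q))) := by
        simp only [Finset.mul_sum, prodForm_apply, LinearMap.flip_apply]
    _ = ∑ i, ∑ j, ∑ k, ∑ l, N i k * N j l * C (e i) (e j) * D (e k) (e l) := by
        rw [sum4_swapPairs, sum4_swap24]
        exact sum4_congr _ _ fun i j k l => by ring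


/-- right bracket as a linear map -/
def lieL (w : g) : g →ₗ[ℝ] g where
  toFun v := ⁅v, w⁆
  map_add' := fun a b => add_lie a b w
  map_smul' := fun c a => smul_lie c a w

@[simp] lemma lieL_apply (w v : g) : lieL w v = ⁅v, w⁆ := rfl

section brackets
variable {n : ℕ} (hn : 5 ≤ n) (e : Module.Basis (Fin n) ℝ g)

/-- bracket of two basis vectors, general form -/
lemma bb (hbr : ∀ (i : ℕ) (hi1 : 1 ≤ i) (hi2 : i ≤ n - 2),
      ⁅e ⟨0, hb0 hn⟩, e ⟨i, hbi hi2 hn⟩⁆ = e ⟨i + 1, hbi1 hi2 hn⟩)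
    (hzero : ∀ i j : Fin n,
      ¬ ((i : ℕ) = 0 ∧ 1 ≤ (j : ℕ) ∧ (j : ℕ) ≤ n - 2) →
      ¬ ((j : ℕ) = 0 ∧ 1 ≤ (i : ℕ) ∧ (i : ℕ) ≤ n - 2) →
      ⁅e i, e j⁆ = 0)
    (j : Fin n) (k : ℕ) (hk1 : 1 ≤ k) (hk2 : k ≤ n - 2) :
    ⁅e j, e ⟨k, hbi hk2 hn⟩⁆ = if (j : ℕ) = 0 then e ⟨k + 1, hbi1 hk2 hn⟩ else 0 := by
  by_cases h : (j : ℕ) = 0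
  · rw [if_pos h]
    have hj : j = ⟨0, hb0 hn⟩ := Fin.ext h
    rw [hj]
    exact hbr k hk1 hk2
  · rw [if_neg h]
    apply hzero
    · rintro ⟨h0, -⟩; exact h h0
    · rintro ⟨h0, -, -⟩; simp only [Fin.val_mk] at h0; omega

/-- bracket with the last basis vector vanishes -/
lemma bz (hzero : ∀ i j : Fin n,
      ¬ ((i : ℕ) = 0 ∧ 1 ≤ (j : ℕ) ∧ (j : ℕ) ≤ n - 2) →
      ¬ ((j : ℕ) = 0 ∧ 1 ≤ (i : ℕ) ∧ (i : ℕ) ≤ n - 2) →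
      ⁅e i, e j⁆ = 0)
    (j : Fin n) : ⁅e j, e ⟨n - 1, by omega⟩⁆ = 0 := by
  apply hzero
  · rintro ⟨-, -, h2⟩; simp only [Fin.val_mk] at h2; omega
  · rintro ⟨h0, -, -⟩; simp only [Fin.val_mk] at h0; omega

/-- bracket of a general vector with the last basis vector vanishes -/
lemma brz (hzero : ∀ i j : Fin n,
      ¬ ((i : ℕ) = 0 ∧ 1 ≤ (j : ℕ) ∧ (j : ℕ) ≤ n - 2) →
      ¬ ((j : ℕ) = 0 ∧ 1 ≤ (i : ℕ) ∧ (i : ℕ) ≤ n - 2) →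
      ⁅e i, e j⁆ = 0)
    (v : g) : ⁅v, e ⟨n - 1, by omega⟩⁆ = 0 := by
  have : ⁅v, e ⟨n - 1, by omega⟩⁆ = lieL (e ⟨n - 1, by omega⟩) v := rfl
  rw [this, ← Module.Basis.sum_repr e v, map_sum]
  apply Finset.sum_eq_zero
  intro j _
  rw [map_smul, lieL_apply, bz hn e hzero j, smul_zero]

/-- bracket of a general vector with a middle basis vector -/
lemma brc_s19 (hbr : ∀ (i : ℕ) (hi1 : 1 ≤ i) (hi2 : i ≤ n - 2),
      ⁅e ⟨0, hb0 hn⟩, e ⟨i, hbi hi2 hn⟩⁆ = e ⟨i + 1, hbi1 hi2 hn⟩)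
    (hzero : ∀ i j : Fin n,
      ¬ ((i : ℕ) = 0 ∧ 1 ≤ (j : ℕ) ∧ (j : ℕ) ≤ n - 2) →
      ¬ ((j : ℕ) = 0 ∧ 1 ≤ (i : ℕ) ∧ (i : ℕ) ≤ n - 2) →
      ⁅e i, e j⁆ = 0)
    (v : g) (k : ℕ) (hk1 : 1 ≤ k) (hk2 : k ≤ n - 2) :
    ⁅v, e ⟨k, hbi hk2 hn⟩⁆ = (e.repr v ⟨0, hb0 hn⟩) • e ⟨k + 1, hbi1 hk2 hn⟩ := by
  have h0 : ⁅v, e ⟨k, hbi hk2 hn⟩⁆ = lieL (e ⟨k, hbi hk2 hn⟩) v := rfl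
  rw [h0]
  conv_lhs => rw [← Module.Basis.sum_repr e v, map_sum]
  rw [Finset.sum_eq_single (⟨0, hb0 hn⟩ : Fin n)]
  · rw [map_smul, lieL_apply]
    congr 1
    rw [bb hn e hbr hzero _ k hk1 hk2, if_pos rfl]
  · intro j _ hj
    rw [map_smul, lieL_apply, bb hn e hbr hzero j k hk1 hk2, if_neg, smul_zero]
    intro hj0; exact hj (Fin.ext hj0)
  · intro h; exact absurd (Finset.mem_univ _) h

end brackets

end AUX


lemma z1 {n : ℕ} (hn : 5 ≤ n) (e : Module.Basis (Fin n) ℝ g)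
    (hzero : ∀ i j : Fin n,
      ¬ ((i : ℕ) = 0 ∧ 1 ≤ (j : ℕ) ∧ (j : ℕ) ≤ n - 2) →
      ¬ ((j : ℕ) = 0 ∧ 1 ≤ (i : ℕ) ∧ (i : ℕ) ≤ n - 2) →
      ⁅e i, e j⁆ = 0)
    (B : LinearMap.BilinForm ℝ g) (v w : g) (i j : Fin n) :
    (B v ⁅e i, e j⁆) * (B w ⁅e i.rev, e j.rev⁆) = 0 := by
  by_cases h1 : (i : ℕ) = 0 ∧ 1 ≤ (j : ℕ) ∧ (j : ℕ) ≤ n - 2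
  · have h : ⁅e i.rev, e j.rev⁆ = 0 := by
      apply hzero
      · rintro ⟨h0, -⟩; rw [Fin.val_rev] at h0; omega
      · rintro ⟨h0, -⟩; rw [Fin.val_rev] at h0; omega
    rw [h, map_zero, mul_zero]
  · by_cases h2 : (j : ℕ) = 0 ∧ 1 ≤ (i : ℕ) ∧ (i : ℕ) ≤ n - 2
    · have h : ⁅e i.rev, e j.rev⁆ = 0 := by
        apply hzero
        · rintro ⟨h0, -⟩; rw [Fin.val_rev] at h0; omega
        · rintro ⟨h0, -⟩; rw [Fin.val_rev] at h0; omega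
      rw [h, map_zero, mul_zero]
    · rw [hzero i j h1 h2, map_zero, zero_mul]

lemma z2 {n : ℕ} (hn : 5 ≤ n) (e : Module.Basis (Fin n) ℝ g)
    (hbr : ∀ (i : ℕ) (hi1 : 1 ≤ i) (hi2 : i ≤ n - 2),
      ⁅e ⟨0, hb0 hn⟩, e ⟨i, hbi hi2 hn⟩⁆ = e ⟨i + 1, hbi1 hi2 hn⟩)
    (hzero : ∀ i j : Fin n,
      ¬ ((i : ℕ) = 0 ∧ 1 ≤ (j : ℕ) ∧ (j : ℕ) ≤ n - 2) →
      ¬ ((j : ℕ) = 0 ∧ 1 ≤ (i : ℕ) ∧ (i : ℕ) ≤ n - 2) →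
      ⁅e i, e j⁆ = 0)
    (v w : g) (i : Fin n) :
    myB e ⁅v, e i⁆ ⁅w, e i.rev⁆ = 0 := by
  by_cases hlast : (i : ℕ) = n - 1
  · have hi : e i = e ⟨n - 1, by omega⟩ := by
      apply congrArg e; apply Fin.ext; simp only [Fin.val_mk]; exact hlast
    rw [hi, brz hn e hzero v, map_zero, LinearMap.zero_apply]
  · by_cases h0 : (i : ℕ) = 0
    · have hi : e i.rev = e ⟨n - 1, by omega⟩ := by
        apply congrArg e; apply Fin.ext; rw [Fin.val_rev]; simp only [Fin.val_mk]; omega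
      rw [hi, brz hn e hzero w, map_zero]
    · have hi1 : 1 ≤ (i : ℕ) := by omega
      have hi2 : (i : ℕ) ≤ n - 2 := by have := i.isLt; omega
      have hr1 : 1 ≤ n - ((i : ℕ) + 1) := by omega
      have hr2 : n - ((i : ℕ) + 1) ≤ n - 2 := by omega
      have hie : e i = e ⟨(i : ℕ), i.isLt⟩ := by congr 1
      have hre : e i.rev = e ⟨n - ((i : ℕ) + 1), by omega⟩ := by
        apply congrArg e; apply Fin.ext; rw [Fin.val_rev]
      rw [hie, hre, brc_s19 hn e hbr hzero v _ hi1 hi2, brc_s19 hn e hbr hzero w _ hr1 hr2]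
      rw [map_smul, map_smul, LinearMap.smul_apply, smul_eq_mul, smul_eq_mul]
      rw [myB_basis]
      rw [if_neg (by
        intro h
        have := congrArg Fin.val h
        rw [Fin.val_rev] at this
        simp only [Fin.val_mk] at this
        omega)]
      ring


noncomputable def brForm (B : LinearMap.BilinForm ℝ g) (v : g) : g →ₗ[ℝ] g →ₗ[ℝ] ℝ :=
  LinearMap.mk₂ ℝ (fun x y => B v ⁅x, y⁆)
    (fun x x' y => by rw [add_lie, map_add])
    (fun c x y => by rw [smul_lie, map_smul, smul_eq_mul])
    (fun x y y' => by rw [lie_add, map_add])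
    (fun c x y => by rw [lie_smul, map_smul, smul_eq_mul])

@[simp] lemma brForm_apply (B : LinearMap.BilinForm ℝ g) (v x y : g) :
    brForm B v x y = B v ⁅x, y⁆ := rfl

noncomputable def adForm (B : LinearMap.BilinForm ℝ g) (v w : g) : g →ₗ[ℝ] g →ₗ[ℝ] ℝ :=
  LinearMap.mk₂ ℝ (fun x y => B ⁅v, x⁆ ⁅w, y⁆)
    (fun x x' y => by rw [lie_add, map_add, LinearMap.add_apply])
    (fun c x y => by rw [lie_smul, map_smul, LinearMap.smul_apply, smul_eq_mul])
    (fun x y y' => by rw [lie_add, map_add])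
    (fun c x y => by rw [lie_smul, map_smul, smul_eq_mul])

@[simp] lemma adForm_apply (B : LinearMap.BilinForm ℝ g) (v w x y : g) :
    adForm B v w x y = B ⁅v, x⁆ ⁅w, y⁆ := rfl

lemma myB_ricciflat {n : ℕ} (hn : 5 ≤ n) (e : Module.Basis (Fin n) ℝ g)
    (hbr : ∀ (i : ℕ) (hi1 : 1 ≤ i) (hi2 : i ≤ n - 2),
      ⁅e ⟨0, hb0 hn⟩, e ⟨i, hbi hi2 hn⟩⁆ = e ⟨i + 1, hbi1 hi2 hn⟩)
    (hzero : ∀ i j : Fin n,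
      ¬ ((i : ℕ) = 0 ∧ 1 ≤ (j : ℕ) ∧ (j : ℕ) ≤ n - 2) →
      ¬ ((j : ℕ) = 0 ∧ 1 ≤ (i : ℕ) ∧ (i : ℕ) ≤ n - 2) →
      ⁅e i, e j⁆ = 0) :
    IsRicciFlat (myB e) := by
  intro m f v w
  have h1 : gram e (myB e) * J n = 1 := by rw [gram_myB]; exact J_mul_J n
  have h2 : J n * gram e (myB e) = 1 := by rw [gram_myB]; exact J_mul_J n
  have e4 : ∑ i, ∑ j, ∑ k, ∑ l,
      (gram f (myB e))⁻¹ i k * (gram f (myB e))⁻¹ j l *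
        (-(myB e v ⁅f i, f j⁆)) * (-(myB e w ⁅f k, f l⁆)) = 0 := by
    have step1 : ∑ i, ∑ j, ∑ k, ∑ l,
        (gram f (myB e))⁻¹ i k * (gram f (myB e))⁻¹ j l *
          (-(myB e v ⁅f i, f j⁆)) * (-(myB e w ⁅f k, f l⁆))
        = ∑ i, ∑ j, ∑ k, ∑ l,
        (gram f (myB e))⁻¹ i k * (gram f (myB e))⁻¹ j l *
          (brForm (myB e) v (f i) (f j)) * (brForm (myB e) w (f k) (f l)) :=
      sum4_congr _ _ fun i j k l => by rw [brForm_apply, brForm_apply]; ring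
    rw [step1, key4 e f (myB e) (J n) h1 h2]
    have step2 : ∑ i, ∑ j, ∑ k, ∑ l,
        J n i k * J n j l * (brForm (myB e) v (e i) (e j)) * (brForm (myB e) w (e k) (e l))
        = ∑ i : Fin n, ∑ j : Fin n,
            (myB e v ⁅e i, e j⁆) * (myB e w ⁅e i.rev, e j.rev⁆) := by
      apply Finset.sum_congr rfl; intro i _
      apply Finset.sum_congr rfl; intro j _
      rw [Finset.sum_eq_single i.rev]
      · rw [Finset.sum_eq_single j.rev]
        · simp [J]
        · intro b _ hb; simp [J, hb]
        · simp
      · intro b _ hb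
        apply Finset.sum_eq_zero; intro l _
        simp [J, hb]
      · simp
    rw [step2]
    exact Finset.sum_eq_zero fun i _ => Finset.sum_eq_zero fun j _ =>
      z1 hn e hzero (myB e) v w i j
  have e2 : ∑ i, ∑ j, (gram f (myB e))⁻¹ i j * myB e ⁅v, f i⁆ ⁅w, f j⁆ = 0 := by
    have step1 : ∑ i, ∑ j, (gram f (myB e))⁻¹ i j * myB e ⁅v, f i⁆ ⁅w, f j⁆
        = ∑ i, ∑ j, (gram f (myB e))⁻¹ i j * adForm (myB e) v w (f i) (f j) := rfl
    rw [step1, key2 e f (myB e) (J n) h1 h2]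
    have step2 : ∑ p, ∑ q, J n p q * adForm (myB e) v w (e p) (e q)
        = ∑ p : Fin n, myB e ⁅v, e p⁆ ⁅w, e p.rev⁆ := by
      apply Finset.sum_congr rfl; intro p _
      rw [Finset.sum_eq_single p.rev]
      · simp [J]
      · intro b _ hb; simp [J, hb]
      · simp
    rw [step2]
    exact Finset.sum_eq_zero fun p _ => z2 hn e hbr hzero v w p
  simp only [ricci]
  rw [e4, e2]
  norm_num


lemma Bval {n : ℕ} (e : Module.Basis (Fin n) ℝ g) (a b : ℕ) (ha : a < n) (hb : b < n) :
    myB e (e ⟨a, ha⟩) (e ⟨b, hb⟩) = if b = n - 1 - a then 1 else 0 := by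
  rw [myB_basis]
  by_cases h : b = n - 1 - a
  · rw [if_pos h, if_pos]
    apply Fin.ext; rw [Fin.val_rev]; simp only [Fin.val_mk]; omega
  · rw [if_neg h, if_neg]
    intro hh
    have := congrArg Fin.val hh
    rw [Fin.val_rev] at this
    simp only [Fin.val_mk] at this
    omega

lemma nabA {n : ℕ} (hn : 5 ≤ n) (e : Module.Basis (Fin n) ℝ g)
    (hbr : ∀ (i : ℕ) (hi1 : 1 ≤ i) (hi2 : i ≤ n - 2),
      ⁅e ⟨0, hb0 hn⟩, e ⟨i, hbi hi2 hn⟩⁆ = e ⟨i + 1, hbi1 hi2 hn⟩)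
    (hzero : ∀ i j : Fin n,
      ¬ ((i : ℕ) = 0 ∧ 1 ≤ (j : ℕ) ∧ (j : ℕ) ≤ n - 2) →
      ¬ ((j : ℕ) = 0 ∧ 1 ≤ (i : ℕ) ∧ (i : ℕ) ≤ n - 2) →
      ⁅e i, e j⁆ = 0)
    (nab : g → g → g) (hLC : IsLeviCivita (myB e) nab) :
    nab (e ⟨1, by omega⟩) (e ⟨0, by omega⟩) = -(e ⟨2, by omega⟩) := by
  have key : ∀ u v z : g,
      (∀ c : Fin n, myB e ⁅u, v⁆ (e c) - myB e ⁅v, e c⁆ u + myB e ⁅e c, u⁆ v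
          = 2 * myB e z (e c)) → nab u v = z := by
    intro u v z h
    apply myB_ext e
    intro c
    have h1 := hLC u v (e c)
    have h2 := h c
    linarith
  apply key
  intro c
  obtain ⟨cv, hcv⟩ := c
  have hb10 : ⁅e ⟨1, by omega⟩, e ⟨0, by omega⟩⁆ = -(e ⟨2, by omega⟩) := by
    rw [← lie_skew, hbr 1 (by omega) (by omega)]
  by_cases hc0 : cv = 0
  · subst hc0
    have t2 : ⁅e ⟨0, by omega⟩, e (⟨0, hcv⟩ : Fin n)⁆ = 0 := lie_self _
    have t3 : ⁅e (⟨0, hcv⟩ : Fin n), e ⟨1, by omega⟩⁆ = e ⟨2, by omega⟩ :=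
      hbr 1 (by omega) (by omega)
    rw [hb10, t2, t3]
    simp only [map_neg, map_zero, LinearMap.neg_apply, LinearMap.zero_apply, Bval]
    split_ifs <;> (try norm_num) <;> omega
  · by_cases hcl : cv = n - 1
    · subst hcl
      have t2 : ⁅e ⟨0, by omega⟩, e (⟨n - 1, hcv⟩ : Fin n)⁆ = 0 := bz hn e hzero _
      have t3 : ⁅e (⟨n - 1, hcv⟩ : Fin n), e ⟨1, by omega⟩⁆ = 0 := by
        rw [bb hn e hbr hzero _ 1 (by omega) (by omega), if_neg (by simp; omega)]
      rw [hb10, t2, t3]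
      simp only [map_neg, map_zero, LinearMap.neg_apply, LinearMap.zero_apply, Bval]
      split_ifs <;> (try norm_num) <;> omega
    · have t2 : ⁅e ⟨0, by omega⟩, e (⟨cv, hcv⟩ : Fin n)⁆ = e ⟨cv + 1, by omega⟩ :=
        hbr cv (by omega) (by omega)
      have t3 : ⁅e (⟨cv, hcv⟩ : Fin n), e ⟨1, by omega⟩⁆ = 0 := by
        rw [bb hn e hbr hzero _ 1 (by omega) (by omega), if_neg (by simp; omega)]
      rw [hb10, t2, t3]
      simp only [map_neg, map_zero, LinearMap.neg_apply, LinearMap.zero_apply, Bval]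
      split_ifs <;> (try norm_num) <;> omega


lemma nabkey {n : ℕ} (e : Module.Basis (Fin n) ℝ g)
    (nab : g → g → g) (hLC : IsLeviCivita (myB e) nab) (u v z : g)
    (h : ∀ c : Fin n, myB e ⁅u, v⁆ (e c) - myB e ⁅v, e c⁆ u + myB e ⁅e c, u⁆ v
          = 2 * myB e z (e c)) : nab u v = z := by
  apply myB_ext e
  intro c
  have h1 := hLC u v (e c)
  have h2 := h c
  linarith

lemma nabB {n : ℕ} (hn : 5 ≤ n) (e : Module.Basis (Fin n) ℝ g)
    (hbr : ∀ (i : ℕ) (hi1 : 1 ≤ i) (hi2 : i ≤ n - 2),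
      ⁅e ⟨0, hb0 hn⟩, e ⟨i, hbi hi2 hn⟩⁆ = e ⟨i + 1, hbi1 hi2 hn⟩)
    (hzero : ∀ i j : Fin n,
      ¬ ((i : ℕ) = 0 ∧ 1 ≤ (j : ℕ) ∧ (j : ℕ) ≤ n - 2) →
      ¬ ((j : ℕ) = 0 ∧ 1 ≤ (i : ℕ) ∧ (i : ℕ) ≤ n - 2) →
      ⁅e i, e j⁆ = 0)
    (nab : g → g → g) (hLC : IsLeviCivita (myB e) nab) :
    nab (e ⟨0, by omega⟩) (e ⟨0, by omega⟩) = -(e ⟨1, by omega⟩) := by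
  apply nabkey e nab hLC
  intro c
  obtain ⟨cv, hcv⟩ := c
  have t1 : ⁅e (⟨0, by omega⟩ : Fin n), e (⟨0, by omega⟩ : Fin n)⁆ = 0 := lie_self _
  by_cases hc0 : cv = 0
  · subst hc0
    have t2 : ⁅e (⟨0, by omega⟩ : Fin n), e (⟨0, hcv⟩ : Fin n)⁆ = 0 := lie_self _
    have t3 : ⁅e (⟨0, hcv⟩ : Fin n), e (⟨0, by omega⟩ : Fin n)⁆ = 0 := lie_self _
    simp only [t1, t2, t3, map_neg, map_zero, LinearMap.neg_apply, LinearMap.zero_apply, Bval]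
    split_ifs <;> (try norm_num) <;> omega
  · by_cases hcl : cv = n - 1
    · subst hcl
      have t2 : ⁅e (⟨0, by omega⟩ : Fin n), e (⟨n - 1, hcv⟩ : Fin n)⁆ = 0 := bz hn e hzero _
      have t3 : ⁅e (⟨n - 1, hcv⟩ : Fin n), e (⟨0, by omega⟩ : Fin n)⁆ = 0 := by
        rw [← lie_skew, t2, neg_zero]
      simp only [t1, t2, t3, map_neg, map_zero, LinearMap.neg_apply, LinearMap.zero_apply, Bval]
      split_ifs <;> (try norm_num) <;> omega
    · have t2 : ⁅e (⟨0, by omega⟩ : Fin n), e (⟨cv, hcv⟩ : Fin n)⁆ = e ⟨cv + 1, by omega⟩ :=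
        hbr cv (by omega) (by have := hcv; omega)
      have t3 : ⁅e (⟨cv, hcv⟩ : Fin n), e (⟨0, by omega⟩ : Fin n)⁆ = -(e ⟨cv + 1, by omega⟩) := by
        rw [← lie_skew, t2]
      simp only [t1, t2, t3, map_neg, map_zero, LinearMap.neg_apply, LinearMap.zero_apply, Bval]
      split_ifs <;> (try norm_num) <;> omega

lemma nabC {n : ℕ} (hn : 5 ≤ n) (e : Module.Basis (Fin n) ℝ g)
    (hbr : ∀ (i : ℕ) (hi1 : 1 ≤ i) (hi2 : i ≤ n - 2),
      ⁅e ⟨0, hb0 hn⟩, e ⟨i, hbi hi2 hn⟩⁆ = e ⟨i + 1, hbi1 hi2 hn⟩)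
    (hzero : ∀ i j : Fin n,
      ¬ ((i : ℕ) = 0 ∧ 1 ≤ (j : ℕ) ∧ (j : ℕ) ≤ n - 2) →
      ¬ ((j : ℕ) = 0 ∧ 1 ≤ (i : ℕ) ∧ (i : ℕ) ≤ n - 2) →
      ⁅e i, e j⁆ = 0)
    (nab : g → g → g) (hLC : IsLeviCivita (myB e) nab) :
    nab (e ⟨2, by omega⟩) (e ⟨0, by omega⟩) = -(e ⟨3, by omega⟩) := by
  apply nabkey e nab hLC
  intro c
  obtain ⟨cv, hcv⟩ := c
  have t1 : ⁅e (⟨2, by omega⟩ : Fin n), e (⟨0, by omega⟩ : Fin n)⁆ = -(e ⟨3, by omega⟩) := by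
    rw [← lie_skew, hbr 2 (by omega) (by omega)]
  by_cases hc0 : cv = 0
  · subst hc0
    have t2 : ⁅e (⟨0, by omega⟩ : Fin n), e (⟨0, hcv⟩ : Fin n)⁆ = 0 := lie_self _
    have t3 : ⁅e (⟨0, hcv⟩ : Fin n), e (⟨2, by omega⟩ : Fin n)⁆ = e ⟨3, by omega⟩ :=
      hbr 2 (by omega) (by omega)
    simp only [t1, t2, t3, map_neg, map_zero, LinearMap.neg_apply, LinearMap.zero_apply, Bval]
    split_ifs <;> (try norm_num) <;> omega
  · by_cases hcl : cv = n - 1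
    · subst hcl
      have t2 : ⁅e (⟨0, by omega⟩ : Fin n), e (⟨n - 1, hcv⟩ : Fin n)⁆ = 0 := bz hn e hzero _
      have t3 : ⁅e (⟨n - 1, hcv⟩ : Fin n), e (⟨2, by omega⟩ : Fin n)⁆ = 0 := by
        rw [bb hn e hbr hzero _ 2 (by omega) (by omega), if_neg (by simp; omega)]
      simp only [t1, t2, t3, map_neg, map_zero, LinearMap.neg_apply, LinearMap.zero_apply, Bval]
      split_ifs <;> (try norm_num) <;> omega
    · have t2 : ⁅e (⟨0, by omega⟩ : Fin n), e (⟨cv, hcv⟩ : Fin n)⁆ = e ⟨cv + 1, by omega⟩ :=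
        hbr cv (by omega) (by have := hcv; omega)
      have t3 : ⁅e (⟨cv, hcv⟩ : Fin n), e (⟨2, by omega⟩ : Fin n)⁆ = 0 := by
        rw [bb hn e hbr hzero _ 2 (by omega) (by omega), if_neg (by simp; omega)]
      simp only [t1, t2, t3, map_neg, map_zero, LinearMap.neg_apply, LinearMap.zero_apply, Bval]
      split_ifs <;> (try norm_num) <;> omega

lemma nabD {n : ℕ} (hn : 5 ≤ n) (e : Module.Basis (Fin n) ℝ g)
    (hbr : ∀ (i : ℕ) (hi1 : 1 ≤ i) (hi2 : i ≤ n - 2),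
      ⁅e ⟨0, hb0 hn⟩, e ⟨i, hbi hi2 hn⟩⁆ = e ⟨i + 1, hbi1 hi2 hn⟩)
    (hzero : ∀ i j : Fin n,
      ¬ ((i : ℕ) = 0 ∧ 1 ≤ (j : ℕ) ∧ (j : ℕ) ≤ n - 2) →
      ¬ ((j : ℕ) = 0 ∧ 1 ≤ (i : ℕ) ∧ (i : ℕ) ≤ n - 2) →
      ⁅e i, e j⁆ = 0)
    (nab : g → g → g) (hLC : IsLeviCivita (myB e) nab) :
    nab (e ⟨0, by omega⟩) (-(e ⟨2, by omega⟩)) = 0 := by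
  apply nabkey e nab hLC
  intro c
  obtain ⟨cv, hcv⟩ := c
  have t1 : ⁅e (⟨0, by omega⟩ : Fin n), -(e (⟨2, by omega⟩ : Fin n))⁆
      = -(e ⟨3, by omega⟩) := by
    rw [lie_neg, hbr 2 (by omega) (by omega)]
  by_cases hc0 : cv = 0
  · subst hc0
    have t2 : ⁅-(e (⟨2, by omega⟩ : Fin n)), e (⟨0, hcv⟩ : Fin n)⁆ = e ⟨3, by omega⟩ := by
      rw [neg_lie, ← lie_skew, hbr 2 (by omega) (by omega), neg_neg]
    have t3 : ⁅e (⟨0, hcv⟩ : Fin n), e (⟨0, by omega⟩ : Fin n)⁆ = 0 := lie_self _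
    simp only [t1, t2, t3, map_neg, map_zero, LinearMap.neg_apply, LinearMap.zero_apply, Bval]
    split_ifs <;> (try norm_num) <;> omega
  · by_cases hcl : cv = n - 1
    · subst hcl
      have t2 : ⁅-(e (⟨2, by omega⟩ : Fin n)), e (⟨n - 1, hcv⟩ : Fin n)⁆ = 0 := by
        rw [neg_lie, bz hn e hzero, neg_zero]
      have t3 : ⁅e (⟨n - 1, hcv⟩ : Fin n), e (⟨0, by omega⟩ : Fin n)⁆ = 0 := by
        rw [← lie_skew, bz hn e hzero, neg_zero]
      simp only [t1, t2, t3, map_neg, map_zero, LinearMap.neg_apply, LinearMap.zero_apply, Bval]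
      split_ifs <;> (try norm_num) <;> omega
    · have t2 : ⁅-(e (⟨2, by omega⟩ : Fin n)), e (⟨cv, hcv⟩ : Fin n)⁆ = 0 := by
        rw [neg_lie, hzero _ _ (by simp) (by simp; omega), neg_zero]
      have t3 : ⁅e (⟨cv, hcv⟩ : Fin n), e (⟨0, by omega⟩ : Fin n)⁆
          = -(e ⟨cv + 1, by omega⟩) := by
        rw [← lie_skew, hbr cv (by omega) (by have := hcv; omega)]
      simp only [t1, t2, t3, map_neg, map_zero, LinearMap.neg_apply, LinearMap.zero_apply, Bval]
      split_ifs <;> (try norm_num) <;> omega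

lemma nabE {n : ℕ} (hn : 5 ≤ n) (e : Module.Basis (Fin n) ℝ g)
    (hbr : ∀ (i : ℕ) (hi1 : 1 ≤ i) (hi2 : i ≤ n - 2),
      ⁅e ⟨0, hb0 hn⟩, e ⟨i, hbi hi2 hn⟩⁆ = e ⟨i + 1, hbi1 hi2 hn⟩)
    (hzero : ∀ i j : Fin n,
      ¬ ((i : ℕ) = 0 ∧ 1 ≤ (j : ℕ) ∧ (j : ℕ) ≤ n - 2) →
      ¬ ((j : ℕ) = 0 ∧ 1 ≤ (i : ℕ) ∧ (i : ℕ) ≤ n - 2) →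
      ⁅e i, e j⁆ = 0)
    (nab : g → g → g) (hLC : IsLeviCivita (myB e) nab) :
    nab (e ⟨1, by omega⟩) (-(e ⟨1, by omega⟩)) = 0 := by
  apply nabkey e nab hLC
  intro c
  obtain ⟨cv, hcv⟩ := c
  have t1 : ⁅e (⟨1, by omega⟩ : Fin n), -(e (⟨1, by omega⟩ : Fin n))⁆ = 0 := by
    rw [lie_neg, lie_self, neg_zero]
  have t3 : ⁅e (⟨cv, hcv⟩ : Fin n), e (⟨1, by omega⟩ : Fin n)⁆
      = if cv = 0 then e ⟨2, by omega⟩ else 0 := by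
    rw [bb hn e hbr hzero _ 1 (by omega) (by omega)]
  have t2 : ⁅-(e (⟨1, by omega⟩ : Fin n)), e (⟨cv, hcv⟩ : Fin n)⁆
      = if cv = 0 then e ⟨2, by omega⟩ else 0 := by
    rw [neg_lie, ← lie_skew, t3, neg_neg]
  rw [t1, t2, t3]
  by_cases hc0 : cv = 0
  · rw [if_pos hc0]
    simp only [map_neg, map_zero, LinearMap.neg_apply, LinearMap.zero_apply, Bval]
    split_ifs <;> (try norm_num) <;> omega
  · rw [if_neg hc0]
    simp only [map_neg, map_zero, LinearMap.neg_apply, LinearMap.zero_apply, Bval]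
    norm_num

/-- For `n ≥ 5`, the standard filiform Lie algebra of dimension `n` admits a
Ricci-flat metric which is not flat. -/
theorem statement19 (n : ℕ) (hn : 5 ≤ n) {g : Type*} [LieRing g] [LieAlgebra ℝ g]
    (e : Module.Basis (Fin n) ℝ g)
    (hbr : ∀ (i : ℕ) (hi1 : 1 ≤ i) (hi2 : i ≤ n - 2),
      ⁅e ⟨0, by omega⟩, e ⟨i, by omega⟩⁆ = e ⟨i + 1, by omega⟩)
    (hzero : ∀ i j : Fin n,
      ¬ ((i : ℕ) = 0 ∧ 1 ≤ (j : ℕ) ∧ (j : ℕ) ≤ n - 2) →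
      ¬ ((j : ℕ) = 0 ∧ 1 ≤ (i : ℕ) ∧ (i : ℕ) ≤ n - 2) →
      ⁅e i, e j⁆ = 0) :
    ∃ B : LinearMap.BilinForm ℝ g, IsSymm B ∧ Nondeg B ∧ IsRicciFlat B ∧ ¬ IsFlat B := by
  refine ⟨myB e, fun x y => myB_symm e x y, ?_, myB_ricciflat hn e hbr hzero, ?_⟩
  · intro v h
    apply myB_ext e v 0
    intro c
    rw [h (e c), map_zero, LinearMap.zero_apply]
  · rintro ⟨nab, hLC, hcurv⟩
    have hA := nabA hn e hbr hzero nab hLC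
    have hB := nabB hn e hbr hzero nab hLC
    have hC := nabC hn e hbr hzero nab hLC
    have hD := nabD hn e hbr hzero nab hLC
    have hE := nabE hn e hbr hzero nab hLC
    have h2 : ⁅e ⟨0, by omega⟩, e ⟨1, by omega⟩⁆ = e ⟨2, by omega⟩ :=
      hbr 1 (by omega) (by omega)
    have hc := hcurv (e ⟨0, by omega⟩) (e ⟨1, by omega⟩) (e ⟨0, by omega⟩)
    rw [curv, h2, hA, hB, hC, hD, hE] at hc
    simp only [sub_zero, add_zero, neg_eq_zero] at hc
    exact Module.Basis.ne_zero e ⟨3, by omega⟩ hc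

end ArrowBreakingPaper
end
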